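/- arXiv:1703.10076 — 8 statements merged into one kernel-verified Lean document; each statement's English description precedes it below -/
import Mathlib

section
/- Let A be a group, F : A ≃* A a group automorphism, and g ∈ A. For T ∈ ℕ define ξ(T) = g · F(g) · F²(g) · ⋯ · F^{T−1}(g) (so ξ(0) = 1, ξ(T+1) = ξ(T) · F^T(g)). Assume there exists a positive integer T with ξ(T) = 1, and let T_g be the least such positive integer. Let c_g be the least positive integer c such that F^c(ξ(c)) = ξ(c) (such c exists, since c = T_g works). Set G = ξ(c_g). Then G has finite order, c_g divides T_g, and T_g = c_g · orderOf(G). -/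
private lemma stmt0_cocycle {A : Type*} [Group A] (F : A ≃* A) (g : A)
    (ξ : ℕ → A) (hξ0 : ξ 0 = 1) (hξs : ∀ T : ℕ, ξ (T + 1) = ξ T * (F ^ T) g) :
    ∀ a b : ℕ, ξ (a + b) = ξ a * (F ^ a) (ξ b) := by
  intro a b
  induction b with
  | zero => simp [hξ0]
  | succ b ih =>
      have h1 : ξ (a + (b + 1)) = ξ (a + b) * (F ^ (a + b)) g := by
        rw [← Nat.add_assoc]; exact hξs (a + b)
      have h2 : (F ^ (a + b)) g = (F ^ a) ((F ^ b) g) := by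
        rw [pow_add]; rfl
      rw [h1, ih, h2, hξs b, map_mul, mul_assoc]

private lemma stmt0_fixpow {A : Type*} [Group A] (F : A ≃* A) (c : ℕ) (x : A)
    (h : (F ^ c) x = x) : ∀ k : ℕ, (F ^ (k * c)) x = x := by
  intro k
  induction k with
  | zero => simp
  | succ k ih =>
      have : (F ^ ((k + 1) * c)) x = (F ^ (k * c)) ((F ^ c) x) := by
        rw [Nat.succ_mul, pow_add]; rfl
      rw [this, h, ih]

/-- Lemma 3.8 (group-cohomological content): for a group `A`, an automorphism `F`,
`g : A`, and the "cocycle" `ξ T = g · F(g) · ⋯ · F^{T-1}(g)`, if `T_g` is the least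
positive integer with `ξ T_g = 1` and `c_g` is the least positive integer `c` with
`F^c (ξ c) = ξ c`, then `G = ξ c_g` has finite order, `c_g ∣ T_g`, and
`T_g = c_g · orderOf G`. -/
theorem stmt0 {A : Type*} [Group A] (F : A ≃* A) (g : A)
    (ξ : ℕ → A) (hξ0 : ξ 0 = 1) (hξs : ∀ T : ℕ, ξ (T + 1) = ξ T * (F ^ T) g)
    (Tg : ℕ) (hTg_pos : 0 < Tg) (hTg_one : ξ Tg = 1)
    (hTg_min : ∀ T : ℕ, 0 < T → ξ T = 1 → Tg ≤ T)
    (cg : ℕ) (hcg_pos : 0 < cg) (hcg_fix : (F ^ cg) (ξ cg) = ξ cg)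
    (hcg_min : ∀ c : ℕ, 0 < c → (F ^ c) (ξ c) = ξ c → cg ≤ c)
    (G : A) (hG : G = ξ cg) :
    IsOfFinOrder G ∧ cg ∣ Tg ∧ Tg = cg * orderOf G := by
  subst hG
  have coc := stmt0_cocycle F g ξ hξ0 hξs
  set G := ξ cg with hGdef
  -- F^(k*cg) fixes G
  have hfix : ∀ k : ℕ, (F ^ (k * cg)) G = G := stmt0_fixpow F cg G hcg_fix
  -- ξ (k * cg) = G ^ k
  have hpow : ∀ k : ℕ, ξ (k * cg) = G ^ k := by
    intro k
    induction k with
    | zero => simpa using hξ0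
    | succ k ih =>
        have : ξ ((k + 1) * cg) = ξ (k * cg) * (F ^ (k * cg)) G := by
          rw [Nat.succ_mul]; exact coc (k * cg) cg
        rw [this, ih, hfix, pow_succ]
  -- F^Tg fixes every ξ a
  have frob : ∀ a : ℕ, (F ^ Tg) (ξ a) = ξ a := by
    intro a
    have h1 : ξ (Tg + a) = (F ^ Tg) (ξ a) := by rw [coc Tg a, hTg_one, one_mul]
    have h2 : ξ (a + Tg) = ξ a := by rw [coc a Tg, hTg_one, map_one, mul_one]
    rw [Nat.add_comm] at h1
    rw [← h1, h2]
  set q := Tg / cg with hq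
  set r := Tg % cg with hr
  have hTgeq : Tg = q * cg + r := by
    rw [hq, hr, Nat.mul_comm]; exact (Nat.div_add_mod Tg cg).symm
  have hrlt : r < cg := Nat.mod_lt _ hcg_pos
  -- r = 0
  have hr0 : r = 0 := by
    by_contra hrne
    have hrpos : 0 < r := Nat.pos_of_ne_zero hrne
    -- F^{q*cg}(ξ r) = G^{-q}
    have h1 : ξ Tg = G ^ q * (F ^ (q * cg)) (ξ r) := by
      rw [hTgeq, coc (q * cg) r, hpow]
    have h2 : (F ^ (q * cg)) (ξ r) = (G ^ q)⁻¹ := by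
      exact eq_inv_of_mul_eq_one_right (h1.symm.trans hTg_one)
    -- F^r fixes G
    have h3 : (F ^ r) G = G := by
      have hT : (F ^ Tg) G = G := frob cg
      have : (F ^ Tg) G = (F ^ r) ((F ^ (q * cg)) G) := by
        rw [hTgeq, Nat.add_comm, pow_add]; rfl
      rw [this, hfix q] at hT
      exact hT
    -- ξ r = G^{-q}
    have h4 : ξ r = (G ^ q)⁻¹ := by
      have hT : (F ^ Tg) (ξ r) = (F ^ r) ((F ^ (q * cg)) (ξ r)) := by
        rw [hTgeq, Nat.add_comm, pow_add]; rfl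
      have := frob r
      rw [hT, h2] at this
      rw [← this, map_inv, map_pow, h3]
    have h5 : (F ^ r) (ξ r) = ξ r := by
      rw [h4, map_inv, map_pow, h3]
    exact absurd (hcg_min r hrpos h5) (Nat.not_le.mpr hrlt)
  have hdvd : cg ∣ Tg := Dvd.intro q (by rw [hTgeq, hr0, Nat.add_zero, Nat.mul_comm])
  have hTgq : Tg = q * cg := by rw [hTgeq, hr0, Nat.add_zero]
  have hqpos : 0 < q := by
    rcases Nat.eq_zero_or_pos q with h | h
    · rw [hTgq, h, Nat.zero_mul] at hTg_pos; exact absurd hTg_pos (lt_irrefl 0)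
    · exact h
  have hGq : G ^ q = 1 := by rw [← hpow, ← hTgq, hTg_one]
  have hfin : IsOfFinOrder G := isOfFinOrder_iff_pow_eq_one.mpr ⟨q, hqpos, hGq⟩
  set n := orderOf G with hn
  have hnpos : 0 < n := hfin.orderOf_pos
  have hndvd : n ∣ q := orderOf_dvd_of_pow_eq_one hGq
  have hle1 : n ≤ q := Nat.le_of_dvd hqpos hndvd
  have hle2 : q ≤ n := by
    have hone : ξ (n * cg) = 1 := by rw [hpow, pow_orderOf_eq_one]
    have := hTg_min (n * cg) (Nat.mul_pos hnpos hcg_pos) hone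
    rw [hTgq] at this
    exact Nat.le_of_mul_le_mul_right this hcg_pos
  have : q = n := Nat.le_antisymm hle2 hle1
  exact ⟨hfin, hdvd, by rw [hTgq, this, Nat.mul_comm]⟩
end

section
/- Let g be a positive integer and z : Fin g → ℂ a family of complex numbers each of finite multiplicative order (roots of unity); set e i = padicValNat 2 (orderOf (z i)). Let T be a positive integer and λ : Fin g → ℂ with (λ i)^T = 1 for all i, and set w i = λ i * z i. If padicValNat 2 T < e i for every i, then padicValNat 2 (orderOf (w i)) = e i for all i. -/
/-- Lemma 4.8: a twist of order `T` with `ord₂ T < min eᵢ` does not change the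
2-valuation vector of the normalized Weil numbers. -/
theorem stmt1 (g : ℕ) (hg : 0 < g) (z : Fin g → ℂ)
    (hz : ∀ i, IsOfFinOrder (z i))
    (e : Fin g → ℕ) (he : ∀ i, e i = padicValNat 2 (orderOf (z i)))
    (T : ℕ) (hT : 0 < T)
    (l : Fin g → ℂ) (hl : ∀ i, (l i) ^ T = 1)
    (w : Fin g → ℂ) (hw : ∀ i, w i = l i * z i)
    (hlt : ∀ i, padicValNat 2 T < e i) :
    ∀ i, padicValNat 2 (orderOf (w i)) = e i := by
  intro i
  have hp : Nat.Prime 2 := Nat.prime_two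
  have hA : IsOfFinOrder (l i) := isOfFinOrder_iff_pow_eq_one.mpr ⟨T, hT, hl i⟩
  have hB := hz i
  have hAB : IsOfFinOrder (l i * z i) := (Commute.all _ _).isOfFinOrder_mul hA hB
  set m := orderOf (l i) with hm
  set n := orderOf (z i) with hn
  set k := orderOf (l i * z i) with hk
  have hm0 : m ≠ 0 := hA.orderOf_pos.ne'
  have hn0 : n ≠ 0 := hB.orderOf_pos.ne'
  have hk0 : k ≠ 0 := hAB.orderOf_pos.ne'
  have hmT : m ∣ T := orderOf_dvd_of_pow_eq_one (hl i)
  -- ν₂ m ≤ ν₂ T < e i = ν₂ n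
  have hνmT : padicValNat 2 m ≤ padicValNat 2 T := by
    have := (Nat.factorization_le_iff_dvd hm0 hT.ne').mpr hmT 2
    rwa [Nat.factorization_def _ hp, Nat.factorization_def _ hp] at this
  have hmn : padicValNat 2 m < padicValNat 2 n := by
    rw [← he i] at *
    exact lt_of_le_of_lt hνmT (hlt i)
  -- k ∣ lcm m n  ⇒  ν₂ k ≤ max (ν₂ m) (ν₂ n)
  have h1 : k ∣ Nat.lcm m n := (Commute.all (l i) (z i)).orderOf_mul_dvd_lcm
  have h2 : n ∣ Nat.lcm m k := (Commute.all (l i) (z i)).orderOf_dvd_lcm_mul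
  have hle1 : padicValNat 2 k ≤ max (padicValNat 2 m) (padicValNat 2 n) := by
    have hlcm0 : Nat.lcm m n ≠ 0 := Nat.lcm_ne_zero hm0 hn0
    have := (Nat.factorization_le_iff_dvd hk0 hlcm0).mpr h1 2
    rwa [Nat.factorization_def _ hp, Nat.factorization_lcm hm0 hn0,
      Finsupp.sup_apply, Nat.factorization_def _ hp, Nat.factorization_def _ hp] at this
  have hle2 : padicValNat 2 n ≤ max (padicValNat 2 m) (padicValNat 2 k) := by
    have hlcm0 : Nat.lcm m k ≠ 0 := Nat.lcm_ne_zero hm0 hk0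
    have := (Nat.factorization_le_iff_dvd hn0 hlcm0).mpr h2 2
    rwa [Nat.factorization_def _ hp, Nat.factorization_lcm hm0 hk0,
      Finsupp.sup_apply, Nat.factorization_def _ hp, Nat.factorization_def _ hp] at this
  have : padicValNat 2 k = padicValNat 2 n := by omega
  rw [hw i, ← hk, this, he i, ← hn]
end

section
/- Let r and g be positive integers and let z, w, λ : Fin g → ℂ satisfy w i = λ i * z i for all i. Suppose M is the least positive integer m such that r·m is even and either (z i)^m = −1 for all i or (z i)^m = 1 for all i, and that moreover (z i)^M = −1 for all i. Suppose N is the least positive integer m such that r·m is even and either (w i)^m = −1 for all i or (w i)^m = 1 for all i, and that moreover (w i)^N = 1 for all i. (Each λ i then has finite multiplicative order.) Let t = lcm over i of orderOf (λ i), and set e_M = padicValNat 2 M and e_N = padicValNat 2 N. Then: if e_N ≤ e_M then padicValNat 2 t = 1 + e_M, and if e_N > e_M then padicValNat 2 t = e_N. -/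
private lemma my_padic_eq_fact {n : ℕ} : padicValNat 2 n = n.factorization 2 :=
  (Nat.factorization_def n Nat.prime_two).symm

private lemma my_mono {a b : ℕ} (h : a ∣ b) (hb : b ≠ 0) :
    padicValNat 2 a ≤ padicValNat 2 b := by
  have ha : a ≠ 0 := by rintro rfl; exact hb (Nat.eq_zero_of_zero_dvd h)
  rw [my_padic_eq_fact, my_padic_eq_fact]
  exact (Nat.factorization_le_iff_dvd ha hb).mpr h 2

private lemma my_two_mul {m : ℕ} (hm : m ≠ 0) :
    padicValNat 2 (2 * m) = padicValNat 2 m + 1 := by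
  rw [my_padic_eq_fact, my_padic_eq_fact, Nat.factorization_mul two_ne_zero hm,
    Finsupp.add_apply, Nat.Prime.factorization Nat.prime_two, Finsupp.single_apply]
  simp [add_comm]

private lemma my_dvd_of {d m : ℕ} (hm : m ≠ 0) (h1 : d ∣ 2 * m)
    (h2 : padicValNat 2 d ≤ padicValNat 2 m) : d ∣ m := by
  have hd : d ≠ 0 := by
    rintro rfl
    have := Nat.eq_zero_of_zero_dvd h1
    omega
  rw [← Nat.factorization_le_iff_dvd hd hm]
  intro p
  have h1' := (Nat.factorization_le_iff_dvd hd (by positivity)).mpr h1 p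
  rw [Nat.factorization_mul two_ne_zero hm, Finsupp.add_apply,
    Nat.Prime.factorization Nat.prime_two, Finsupp.single_apply] at h1'
  by_cases hp : p = 2
  · subst hp
    rw [my_padic_eq_fact, my_padic_eq_fact] at h2
    exact h2
  · simpa [Ne.symm hp] using h1'

private lemma my_half {d m : ℕ} (hm : m ≠ 0) (h1 : d ∣ 2 * m) (h2 : ¬ d ∣ m) :
    padicValNat 2 d = padicValNat 2 m + 1 := by
  have hle : padicValNat 2 d ≤ padicValNat 2 m + 1 := by
    have := my_mono h1 (by positivity)
    rwa [my_two_mul hm] at this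
  have hgt : ¬ padicValNat 2 d ≤ padicValNat 2 m := fun h => h2 (my_dvd_of hm h1 h)
  omega

private lemma my_lcm {a b : ℕ} (ha : a ≠ 0) (hb : b ≠ 0) :
    padicValNat 2 (Nat.lcm a b) = max (padicValNat 2 a) (padicValNat 2 b) := by
  rw [my_padic_eq_fact, my_padic_eq_fact, my_padic_eq_fact,
    Nat.factorization_lcm ha hb, Finsupp.sup_apply]

private lemma my_lcm_ne_zero {ι : Type*} (s : Finset ι) (f : ι → ℕ)
    (hf : ∀ i ∈ s, f i ≠ 0) : s.lcm f ≠ 0 := by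
  intro h
  rw [Finset.lcm_eq_zero_iff] at h
  obtain ⟨i, hi, hfi⟩ := h
  exact hf i hi hfi

private lemma my_lcm_le {ι : Type*} (s : Finset ι) (f : ι → ℕ) (k : ℕ)
    (hf : ∀ i ∈ s, f i ≠ 0) (h : ∀ i ∈ s, padicValNat 2 (f i) ≤ k) :
    padicValNat 2 (s.lcm f) ≤ k := by
  classical
  induction s using Finset.induction_on with
  | empty => simp [padicValNat.one]
  | @insert a s ha ih =>
    rw [Finset.lcm_insert, lcm_eq_nat_lcm,
      my_lcm (hf a (Finset.mem_insert_self a s))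
        (my_lcm_ne_zero s f fun i hi => hf i (Finset.mem_insert_of_mem hi))]
    exact max_le (h a (Finset.mem_insert_self a s))
      (ih (fun i hi => hf i (Finset.mem_insert_of_mem hi))
        (fun i hi => h i (Finset.mem_insert_of_mem hi)))

/-- Proposition 4.10: if `A/K` has period `M` and parity `+1` and its twist has
period `N` and parity `-1`, then `ord₂ t = 1 + ord₂ M` if `ord₂ N ≤ ord₂ M`, and
`ord₂ t = ord₂ N` if `ord₂ N > ord₂ M`, where `t = lcmᵢ (orderOf λᵢ)`. -/
theorem stmt2 (r g : ℕ) (hr : 0 < r) (hg : 0 < g)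
    (z w l : Fin g → ℂ) (hw : ∀ i, w i = l i * z i)
    (M : ℕ) (hM_pos : 0 < M) (hM_even : Even (r * M))
    (hM_prop : (∀ i, z i ^ M = -1) ∨ (∀ i, z i ^ M = 1))
    (hM_min : ∀ m : ℕ, 0 < m → Even (r * m) →
      ((∀ i, z i ^ m = -1) ∨ (∀ i, z i ^ m = 1)) → M ≤ m)
    (hM_par : ∀ i, z i ^ M = -1)
    (N : ℕ) (hN_pos : 0 < N) (hN_even : Even (r * N))
    (hN_prop : (∀ i, w i ^ N = -1) ∨ (∀ i, w i ^ N = 1))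
    (hN_min : ∀ m : ℕ, 0 < m → Even (r * m) →
      ((∀ i, w i ^ m = -1) ∨ (∀ i, w i ^ m = 1)) → N ≤ m)
    (hN_par : ∀ i, w i ^ N = 1)
    (t : ℕ) (ht : t = Finset.univ.lcm fun i => orderOf (l i))
    (eM eN : ℕ) (heM : eM = padicValNat 2 M) (heN : eN = padicValNat 2 N) :
    (eN ≤ eM → padicValNat 2 t = 1 + eM) ∧ (eM < eN → padicValNat 2 t = eN) := by
  -- nonvanishing
  have hz0 : ∀ i, z i ≠ 0 := by
    intro i h
    have h1 := hM_par i
    rw [h, zero_pow hM_pos.ne'] at h1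
    exact absurd h1.symm (by norm_num)
  have hw0 : ∀ i, w i ≠ 0 := by
    intro i h
    have h1 := hN_par i
    rw [h, zero_pow hN_pos.ne'] at h1
    exact absurd h1 (by norm_num)
  have hl0 : ∀ i, l i ≠ 0 := fun i h => hw0 i (by rw [hw i, h, zero_mul])
  have hl : ∀ i, l i = w i / z i := fun i => (eq_div_iff (hz0 i)).mpr (hw i).symm
  -- orders are finite/nonzero
  have hZpow : ∀ i, z i ^ (2 * M) = 1 := fun i => by
    rw [mul_comm, pow_mul, hM_par i]; norm_num
  have hZ0 : ∀ i, orderOf (z i) ≠ 0 := fun i =>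
    (orderOf_pos_iff.mpr (isOfFinOrder_iff_pow_eq_one.mpr ⟨2 * M, by omega, hZpow i⟩)).ne'
  have hW0 : ∀ i, orderOf (w i) ≠ 0 := fun i =>
    (orderOf_pos_iff.mpr (isOfFinOrder_iff_pow_eq_one.mpr ⟨N, hN_pos, hN_par i⟩)).ne'
  -- divisibility relations among the three orders
  have hLdvd : ∀ i, orderOf (l i) ∣ Nat.lcm (orderOf (z i)) (orderOf (w i)) := by
    intro i
    rw [orderOf_dvd_iff_pow_eq_one, hl i, div_pow,
      orderOf_dvd_iff_pow_eq_one.mp (Nat.dvd_lcm_left _ _),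
      orderOf_dvd_iff_pow_eq_one.mp (Nat.dvd_lcm_right _ _), div_one]
  have hL0 : ∀ i, orderOf (l i) ≠ 0 := by
    intro i
    refine (orderOf_pos_iff.mpr (isOfFinOrder_iff_pow_eq_one.mpr
      ⟨Nat.lcm (orderOf (z i)) (orderOf (w i)),
        Nat.pos_of_ne_zero (Nat.lcm_ne_zero (hZ0 i) (hW0 i)), ?_⟩)).ne'
    exact orderOf_dvd_iff_pow_eq_one.mp (hLdvd i)
  have hWdvd : ∀ i, orderOf (w i) ∣ Nat.lcm (orderOf (z i)) (orderOf (l i)) := by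
    intro i
    rw [orderOf_dvd_iff_pow_eq_one, hw i, mul_pow,
      orderOf_dvd_iff_pow_eq_one.mp (Nat.dvd_lcm_left _ _),
      orderOf_dvd_iff_pow_eq_one.mp (Nat.dvd_lcm_right _ _), mul_one]
  have hZdvd2 : ∀ i, orderOf (z i) ∣ Nat.lcm (orderOf (w i)) (orderOf (l i)) := by
    intro i
    have hz : z i = w i / l i := (eq_div_iff (hl0 i)).mpr (by rw [hw i, mul_comm])
    rw [orderOf_dvd_iff_pow_eq_one, hz, div_pow,
      orderOf_dvd_iff_pow_eq_one.mp (Nat.dvd_lcm_left _ _),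
      orderOf_dvd_iff_pow_eq_one.mp (Nat.dvd_lcm_right _ _), div_one]
  -- 2-adic valuation of the orders of z i
  have hZval : ∀ i, padicValNat 2 (orderOf (z i)) = eM + 1 := by
    intro i
    rw [heM]
    apply my_half hM_pos.ne' (orderOf_dvd_iff_pow_eq_one.mpr (hZpow i))
    intro hdvd
    have h1 := orderOf_dvd_iff_pow_eq_one.mp hdvd
    rw [hM_par i] at h1
    norm_num at h1
  have hWleN : ∀ i, padicValNat 2 (orderOf (w i)) ≤ eN := by
    intro i
    rw [heN]
    exact my_mono (orderOf_dvd_iff_pow_eq_one.mpr (hN_par i)) hN_pos.ne'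
  have ht0 : t ≠ 0 := by
    rw [ht]; exact my_lcm_ne_zero _ _ fun i _ => hL0 i
  constructor
  · -- case ord₂ N ≤ ord₂ M
    intro hle
    have hLval : ∀ i, padicValNat 2 (orderOf (l i)) = eM + 1 := by
      intro i
      have hW_lt : padicValNat 2 (orderOf (w i)) < eM + 1 := by
        have := hWleN i; omega
      have h1 : padicValNat 2 (orderOf (l i)) ≤
          max (padicValNat 2 (orderOf (z i))) (padicValNat 2 (orderOf (w i))) := by
        rw [← my_lcm (hZ0 i) (hW0 i)]
        exact my_mono (hLdvd i) (Nat.lcm_ne_zero (hZ0 i) (hW0 i))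
      have h2 : padicValNat 2 (orderOf (z i)) ≤
          max (padicValNat 2 (orderOf (w i))) (padicValNat 2 (orderOf (l i))) := by
        rw [← my_lcm (hW0 i) (hL0 i)]
        exact my_mono (hZdvd2 i) (Nat.lcm_ne_zero (hW0 i) (hL0 i))
      rw [hZval i] at h1 h2
      omega
    have hi0 : (⟨0, hg⟩ : Fin g) ∈ Finset.univ := Finset.mem_univ _
    have hlow : eM + 1 ≤ padicValNat 2 t := by
      rw [← hLval ⟨0, hg⟩]
      exact my_mono (ht ▸ Finset.dvd_lcm hi0) ht0
    have hhigh : padicValNat 2 t ≤ eM + 1 := by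
      rw [ht]
      exact my_lcm_le _ _ _ (fun i _ => hL0 i) (fun i _ => (hLval i).le)
    omega
  · -- case ord₂ M < ord₂ N
    intro hlt
    -- upper bound
    have hhigh : padicValNat 2 t ≤ eN := by
      rw [ht]
      refine my_lcm_le _ _ _ (fun i _ => hL0 i) (fun i _ => ?_)
      have h1 : padicValNat 2 (orderOf (l i)) ≤
          max (padicValNat 2 (orderOf (z i))) (padicValNat 2 (orderOf (w i))) := by
        rw [← my_lcm (hZ0 i) (hW0 i)]
        exact my_mono (hLdvd i) (Nat.lcm_ne_zero (hZ0 i) (hW0 i))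
      have := hWleN i
      rw [hZval i] at h1
      omega
    -- lower bound
    have hlow : ∃ i, eN ≤ padicValNat 2 (orderOf (l i)) := by
      by_contra hcon
      push_neg at hcon
      -- N is even
      have heN1 : 1 ≤ eN := by omega
      have h2N : 2 ∣ N := by
        have : (2 : ℕ) ^ 1 ∣ N := by
          rw [Nat.Prime.pow_dvd_iff_le_factorization Nat.prime_two hN_pos.ne',
            ← my_padic_eq_fact, ← heN]
          exact heN1
        simpa using this
      obtain ⟨m, hm⟩ := h2N
      have hm_pos : 0 < m := by omega
      have hmval : padicValNat 2 m + 1 = eN := by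
        rw [heN, hm, my_two_mul hm_pos.ne']
      -- evenness of r * m
      have hrm_even : Even (r * m) := by
        rcases Nat.lt_or_ge 1 eN with h2 | h2
        · -- eN ≥ 2, so m is even
          refine Nat.even_mul.mpr (Or.inr ?_)
          have : (2 : ℕ) ^ 1 ∣ m := by
            rw [Nat.Prime.pow_dvd_iff_le_factorization Nat.prime_two hm_pos.ne',
              ← my_padic_eq_fact]
            omega
          exact (even_iff_two_dvd).mpr (by simpa using this)
        · -- eN = 1, eM = 0, so M odd hence r even
          have heM0 : eM = 0 := by omega
          have hModd : ¬ 2 ∣ M := by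
            intro hdvd
            have : (2 : ℕ) ^ 1 ∣ M := by simpa using hdvd
            rw [Nat.Prime.pow_dvd_iff_le_factorization Nat.prime_two hM_pos.ne',
              ← my_padic_eq_fact, ← heM, heM0] at this
            omega
          have hre : Even r := by
            rcases Nat.even_mul.mp hM_even with h | h
            · exact h
            · exact absurd (even_iff_two_dvd.mp h) hModd
          exact Nat.even_mul.mpr (Or.inl hre)
      -- all w i ^ m agree in sign
      have hNlem : N ≤ m := by
        apply hN_min m hm_pos hrm_even
        rcases Nat.lt_or_ge (eM + 1) eN with hAB | hAB
        · -- subcase eM + 1 < eN : all w i ^ m = 1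
          refine Or.inr fun i => ?_
          have hWval : padicValNat 2 (orderOf (w i)) ≤ padicValNat 2 m := by
            have h1 : padicValNat 2 (orderOf (w i)) ≤
                max (padicValNat 2 (orderOf (z i))) (padicValNat 2 (orderOf (l i))) := by
              rw [← my_lcm (hZ0 i) (hL0 i)]
              exact my_mono (hWdvd i) (Nat.lcm_ne_zero (hZ0 i) (hL0 i))
            have := hcon i
            rw [hZval i] at h1
            omega
          have hWm : orderOf (w i) ∣ m :=
            my_dvd_of hm_pos.ne'
              (by rw [← hm]; exact orderOf_dvd_iff_pow_eq_one.mpr (hN_par i)) hWval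
          exact orderOf_dvd_iff_pow_eq_one.mp hWm
        · -- subcase eM + 1 = eN : all w i ^ m = -1
          have hAB' : eM + 1 = eN := by omega
          refine Or.inl fun i => ?_
          have hWval : padicValNat 2 (orderOf (w i)) = eN := by
            have h1 : padicValNat 2 (orderOf (w i)) ≤
                max (padicValNat 2 (orderOf (z i))) (padicValNat 2 (orderOf (l i))) := by
              rw [← my_lcm (hZ0 i) (hL0 i)]
              exact my_mono (hWdvd i) (Nat.lcm_ne_zero (hZ0 i) (hL0 i))
            have h2 : padicValNat 2 (orderOf (z i)) ≤
                max (padicValNat 2 (orderOf (w i))) (padicValNat 2 (orderOf (l i))) := by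
              rw [← my_lcm (hW0 i) (hL0 i)]
              exact my_mono (hZdvd2 i) (Nat.lcm_ne_zero (hW0 i) (hL0 i))
            have := hcon i
            rw [hZval i] at h1 h2
            omega
          have hWnm : ¬ orderOf (w i) ∣ m := by
            intro hdvd
            have := my_mono hdvd hm_pos.ne'
            omega
          have hsq : (w i ^ m) * (w i ^ m) = 1 := by
            rw [← pow_add]
            have : m + m = N := by omega
            rw [this]
            exact hN_par i
          rcases mul_self_eq_one_iff.mp hsq with h1 | h1
          · exact absurd (orderOf_dvd_iff_pow_eq_one.mpr h1) hWnm
          · exact h1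
      omega
    obtain ⟨i, hi⟩ := hlow
    have : padicValNat 2 (orderOf (l i)) ≤ padicValNat 2 t :=
      my_mono (ht ▸ Finset.dvd_lcm (Finset.mem_univ i)) ht0
    omega
end

section
/- Let r and g be positive integers and let z, w, λ : Fin g → ℂ satisfy w i = λ i * z i for all i. Suppose M is the least positive integer m such that r·m is even and either (z i)^m = −1 for all i or (z i)^m = 1 for all i, and that moreover (z i)^M = −1 for all i. Let T be a positive integer with (λ i)^T = 1 for all i and padicValNat 2 T ≤ padicValNat 2 M. Let N be the least positive integer m such that r·m is even and either (w i)^m = −1 for all i or (w i)^m = 1 for all i. Then (w i)^N = −1 for all i. -/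
/-- Corollary 4.11(1): if `A/K` has period `M` and parity `+1` and `A'/K` is a twist
of order `T` with `ord₂ T ≤ ord₂ M`, then `A'/K` also has parity `+1`. -/
theorem stmt3 (r g : ℕ) (hr : 0 < r) (hg : 0 < g)
    (z w l : Fin g → ℂ) (hw : ∀ i, w i = l i * z i)
    (M : ℕ) (hM_pos : 0 < M) (hM_even : Even (r * M))
    (hM_prop : (∀ i, z i ^ M = -1) ∨ (∀ i, z i ^ M = 1))
    (hM_min : ∀ m : ℕ, 0 < m → Even (r * m) →
      ((∀ i, z i ^ m = -1) ∨ (∀ i, z i ^ m = 1)) → M ≤ m)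
    (hM_par : ∀ i, z i ^ M = -1)
    (T : ℕ) (hT_pos : 0 < T) (hT : ∀ i, (l i) ^ T = 1)
    (hT2 : padicValNat 2 T ≤ padicValNat 2 M)
    (N : ℕ) (hN_pos : 0 < N) (hN_even : Even (r * N))
    (hN_prop : (∀ i, w i ^ N = -1) ∨ (∀ i, w i ^ N = 1))
    (hN_min : ∀ m : ℕ, 0 < m → Even (r * m) →
      ((∀ i, w i ^ m = -1) ∨ (∀ i, w i ^ m = 1)) → N ≤ m) :
    ∀ i, w i ^ N = -1 := by
  intro i
  rcases hN_prop with h | h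
  · exact h i
  exfalso
  haveI : Fact (Nat.Prime 2) := ⟨Nat.prime_two⟩
  set a := padicValNat 2 T with ha
  have h2aT : 2 ^ a ∣ T := pow_padicValNat_dvd
  set T' := T / 2 ^ a with hT'def
  have hTfac : 2 ^ a * T' = T := Nat.mul_div_cancel' h2aT
  have hT'pos : 0 < T' := Nat.div_pos (Nat.le_of_dvd hT_pos h2aT) (by positivity)
  have hT'odd : Odd T' := by
    rw [← Nat.not_even_iff_odd]
    rintro ⟨k, hk⟩
    refine pow_succ_padicValNat_not_dvd (p := 2) hT_pos.ne' ⟨k, ?_⟩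
    calc T = 2 ^ a * T' := hTfac.symm
      _ = 2 ^ a * (k + k) := by rw [hk]
      _ = 2 ^ (padicValNat 2 T + 1) * k := by rw [← ha]; ring
  have h2aM : 2 ^ a ∣ M := dvd_trans (pow_dvd_pow 2 hT2) pow_padicValNat_dvd
  set m := M * T' with hm
  have hmpos : 0 < m := Nat.mul_pos hM_pos hT'pos
  have hmeven : Even (r * m) := by
    rw [hm, ← mul_assoc]; exact hM_even.mul_right T'
  have hTdvdm : T ∣ m := by
    rw [← hTfac, hm]; exact mul_dvd_mul h2aM dvd_rfl
  have hwm : ∀ j, w j ^ m = -1 := by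
    intro j
    obtain ⟨k, hk⟩ := hTdvdm
    have hl : l j ^ m = 1 := by rw [hk, pow_mul, hT j, one_pow]
    have hz : z j ^ m = -1 := by
      rw [hm, pow_mul, hM_par j, hT'odd.neg_one_pow]
    rw [hw j, mul_pow, hl, hz, one_mul]
  -- remainder argument
  set s := m % N with hs
  have hslt : s < N := Nat.mod_lt _ hN_pos
  have hws : ∀ j, w j ^ s = -1 := by
    intro j
    have key : w j ^ (N * (m / N) + s) = -1 := by rw [hs, Nat.div_add_mod]; exact hwm j
    rw [pow_add, pow_mul, h j, one_pow, one_mul] at key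
    exact key
  rcases Nat.eq_zero_or_pos s with hs0 | hs0
  · have := hws i
    rw [hs0, pow_zero] at this
    norm_num at this
  · have hse : Even (r * s) := by
      have hdecomp : r * m = r * (N * (m / N)) + r * s := by
        rw [← Nat.left_distrib, Nat.div_add_mod]
      have hev : Even (r * (N * (m / N))) := by
        rw [← mul_assoc]; exact hN_even.mul_right _
      rw [hdecomp] at hmeven
      exact (Nat.even_add.mp hmeven).mp hev
    have := hN_min s hs0 hse (Or.inl hws)
    omega
end

section
/- Let r and g be positive integers and let z, w, λ : Fin g → ℂ satisfy w i = λ i * z i for all i. Suppose N is the least positive integer m such that r·m is even and either (w i)^m = −1 for all i or (w i)^m = 1 for all i, and that moreover (w i)^N = 1 for all i. Let T be a positive integer with (λ i)^T = 1 for all i, and assume either padicValNat 2 T < padicValNat 2 N, or padicValNat 2 T = padicValNat 2 N = 0. Let M be the least positive integer m such that r·m is even and either (z i)^m = −1 for all i or (z i)^m = 1 for all i. Then (z i)^M = 1 for all i. -/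
/-- 2-adic valuation is monotone under divisibility. -/
lemma aux_fac_le {d n : ℕ} (hd : d ∣ n) (hn : n ≠ 0) :
    d.factorization 2 ≤ n.factorization 2 := by
  have hd0 : d ≠ 0 := by rintro rfl; exact hn (Nat.eq_zero_of_zero_dvd hd)
  exact Finsupp.le_def.mp ((Nat.factorization_le_iff_dvd hd0 hn).mpr hd) 2

/-- If `d ∣ 2m` and the 2-adic valuation of `d` is at most that of `m`, then `d ∣ m`. -/
lemma aux_dvd_of_le {d m : ℕ} (hm : 0 < m) (hd : d ∣ 2 * m)
    (hv : d.factorization 2 ≤ m.factorization 2) : d ∣ m := by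
  have h2m : (2 : ℕ) * m ≠ 0 := by positivity
  have hd0 : d ≠ 0 := by rintro rfl; exact h2m (Nat.eq_zero_of_zero_dvd hd)
  rw [← Nat.factorization_le_iff_dvd hd0 hm.ne']
  have h2 : d.factorization ≤ (2 * m).factorization :=
    (Nat.factorization_le_iff_dvd hd0 h2m).mpr hd
  rw [Finsupp.le_def] at h2 ⊢
  intro p
  rcases eq_or_ne p 2 with rfl | hp
  · exact hv
  · have h3 := h2 p
    rw [Nat.factorization_mul (by norm_num) hm.ne', Finsupp.add_apply,
      Nat.Prime.factorization Nat.prime_two, Finsupp.single_apply,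
      if_neg (fun h => hp h.symm)] at h3
    omega

/-- If `d ∣ 2m` but `d ∤ m`, then `v₂ d = v₂ m + 1`. -/
lemma aux_fac_eq {d m : ℕ} (hm : 0 < m) (hd : d ∣ 2 * m) (hnd : ¬ d ∣ m) :
    d.factorization 2 = m.factorization 2 + 1 := by
  have h2m : (2 : ℕ) * m ≠ 0 := by positivity
  have h1 : d.factorization 2 ≤ (2 * m).factorization 2 := aux_fac_le hd h2m
  rw [Nat.factorization_mul (by norm_num) hm.ne', Finsupp.add_apply,
    Nat.Prime.factorization_self Nat.prime_two] at h1
  have h2 : ¬ d.factorization 2 ≤ m.factorization 2 :=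
    fun h => hnd (aux_dvd_of_le hm hd h)
  omega

/-- Corollary 4.11(2): if `A'/K` has period `N` and parity `-1` and `A/K` is a twist
of order `T` with `ord₂ T < ord₂ N` or `ord₂ T = ord₂ N = 0`, then `A/K` also has
parity `-1`. -/
theorem stmt4 (r g : ℕ) (hr : 0 < r) (hg : 0 < g)
    (z w l : Fin g → ℂ) (hw : ∀ i, w i = l i * z i)
    (N : ℕ) (hN_pos : 0 < N) (hN_even : Even (r * N))
    (hN_prop : (∀ i, w i ^ N = -1) ∨ (∀ i, w i ^ N = 1))
    (hN_min : ∀ m : ℕ, 0 < m → Even (r * m) →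
      ((∀ i, w i ^ m = -1) ∨ (∀ i, w i ^ m = 1)) → N ≤ m)
    (hN_par : ∀ i, w i ^ N = 1)
    (T : ℕ) (hT_pos : 0 < T) (hT : ∀ i, (l i) ^ T = 1)
    (hT2 : padicValNat 2 T < padicValNat 2 N ∨
      (padicValNat 2 T = padicValNat 2 N ∧ padicValNat 2 N = 0))
    (M : ℕ) (hM_pos : 0 < M) (hM_even : Even (r * M))
    (hM_prop : (∀ i, z i ^ M = -1) ∨ (∀ i, z i ^ M = 1))
    (hM_min : ∀ m : ℕ, 0 < m → Even (r * m) →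
      ((∀ i, z i ^ m = -1) ∨ (∀ i, z i ^ m = 1)) → M ≤ m) :
    ∀ i, z i ^ M = 1 := by
  rcases hM_prop with hMneg | hMpos
  swap
  · exact hMpos
  exfalso
  -- notation for 2-adic valuations
  set a := N.factorization 2 with ha_def
  set b := T.factorization 2 with hb_def
  set c := M.factorization 2 with hc_def
  have hT2' : b < a ∨ (b = a ∧ a = 0) := by
    rw [ha_def, hb_def, Nat.factorization_def N Nat.prime_two,
      Nat.factorization_def T Nat.prime_two]
    exact hT2
  -- basic facts about orders
  have hz2M : ∀ i, z i ^ (2 * M) = 1 := by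
    intro i
    rw [mul_comm, pow_mul, hMneg i]; norm_num
  have hdz_dvd : ∀ i, orderOf (z i) ∣ 2 * M :=
    fun i => orderOf_dvd_iff_pow_eq_one.mpr (hz2M i)
  have hdz_not : ∀ i, ¬ orderOf (z i) ∣ M := by
    intro i h
    have h1 := orderOf_dvd_iff_pow_eq_one.mp h
    rw [hMneg i] at h1
    norm_num at h1
  have hdz_val : ∀ i, (orderOf (z i)).factorization 2 = c + 1 :=
    fun i => aux_fac_eq hM_pos (hdz_dvd i) (hdz_not i)
  have hdz_pos : ∀ i, 0 < orderOf (z i) := fun i =>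
    orderOf_pos_iff.mpr (isOfFinOrder_iff_pow_eq_one.mpr ⟨2 * M, by omega, hz2M i⟩)
  have hdw_dvd : ∀ i, orderOf (w i) ∣ N :=
    fun i => orderOf_dvd_iff_pow_eq_one.mpr (hN_par i)
  have hdw_pos : ∀ i, 0 < orderOf (w i) := fun i =>
    orderOf_pos_iff.mpr (isOfFinOrder_iff_pow_eq_one.mpr ⟨N, hN_pos, hN_par i⟩)
  have hdw_val_le : ∀ i, (orderOf (w i)).factorization 2 ≤ a :=
    fun i => aux_fac_le (hdw_dvd i) hN_pos.ne'
  -- the order of z i divides lcm T (orderOf (w i))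
  have hdz_val_le : ∀ i, c + 1 ≤ b ∨ c + 1 ≤ (orderOf (w i)).factorization 2 := by
    intro i
    have hdz_lcm : (orderOf (z i)) ∣ Nat.lcm T (orderOf (w i)) := by
      rw [orderOf_dvd_iff_pow_eq_one]
      obtain ⟨k, hk⟩ := Nat.dvd_lcm_left T (orderOf (w i))
      have hl1 : l i ^ Nat.lcm T (orderOf (w i)) = 1 := by
        rw [hk, pow_mul, hT i, one_pow]
      have hw1 : w i ^ Nat.lcm T (orderOf (w i)) = 1 :=
        orderOf_dvd_iff_pow_eq_one.mp (Nat.dvd_lcm_right _ _)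
      calc z i ^ Nat.lcm T (orderOf (w i))
          = (l i * z i) ^ Nat.lcm T (orderOf (w i)) := by
            rw [mul_pow, hl1, one_mul]
        _ = w i ^ Nat.lcm T (orderOf (w i)) := by rw [← hw i]
        _ = 1 := hw1
    have h := aux_fac_le hdz_lcm (Nat.lcm_ne_zero hT_pos.ne' (hdw_pos i).ne')
    rw [Nat.factorization_lcm hT_pos.ne' (hdw_pos i).ne', Finsupp.sup_apply,
      hdz_val i] at h
    exact le_sup_iff.mp h
  -- dispose of the case v₂ T = v₂ N = 0
  rcases hT2' with hba | ⟨hba, ha0⟩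
  swap
  · have h1 := hdw_val_le ⟨0, hg⟩
    rcases hdz_val_le ⟨0, hg⟩ with h2 | h2 <;> omega
  -- now b < a, so N is even
  have ha1 : 1 ≤ a := by omega
  have h2N : 2 ∣ N :=
    (Nat.Prime.dvd_iff_one_le_factorization Nat.prime_two hN_pos.ne').mpr ha1
  obtain ⟨m, hm⟩ := h2N
  have hm_pos : 0 < m := by omega
  have hm_val : a = m.factorization 2 + 1 := by
    rw [ha_def, hm, Nat.factorization_mul (by norm_num) hm_pos.ne',
      Finsupp.add_apply, Nat.Prime.factorization_self Nat.prime_two]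
    omega
  -- Claim A : a ≤ c + 1
  have hA : a ≤ c + 1 := by
    by_contra hA
    push_neg at hA
    -- every orderOf (w i) divides m = N/2
    have hdvd : ∀ i, w i ^ m = 1 := by
      intro i
      rw [← orderOf_dvd_iff_pow_eq_one]
      refine aux_dvd_of_le hm_pos (hm ▸ hdw_dvd i) ?_
      -- orderOf (w i) ∣ lcm T (orderOf (z i))
      have hdw_lcm : (orderOf (w i)) ∣ Nat.lcm T (orderOf (z i)) := by
        rw [orderOf_dvd_iff_pow_eq_one]
        obtain ⟨k, hk⟩ := Nat.dvd_lcm_left T (orderOf (z i))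
        have hl1 : l i ^ Nat.lcm T (orderOf (z i)) = 1 := by
          rw [hk, pow_mul, hT i, one_pow]
        have hz1 : z i ^ Nat.lcm T (orderOf (z i)) = 1 :=
          orderOf_dvd_iff_pow_eq_one.mp (Nat.dvd_lcm_right _ _)
        calc w i ^ Nat.lcm T (orderOf (z i))
            = (l i * z i) ^ Nat.lcm T (orderOf (z i)) := by rw [hw i]
          _ = 1 := by rw [mul_pow, hl1, hz1, one_mul]
      have h3 := aux_fac_le hdw_lcm (Nat.lcm_ne_zero hT_pos.ne' (hdz_pos i).ne')
      rw [Nat.factorization_lcm hT_pos.ne' (hdz_pos i).ne', Finsupp.sup_apply,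
        hdz_val i] at h3
      rcases le_sup_iff.mp h3 with h4 | h4 <;> omega
    have hm_even : Even (r * m) := by
      rw [Nat.even_mul]
      right
      have h2m : 2 ∣ m :=
        (Nat.Prime.dvd_iff_one_le_factorization Nat.prime_two hm_pos.ne').mpr
          (by omega)
      obtain ⟨k, hk⟩ := h2m
      exact ⟨k, by omega⟩
    have := hN_min m hm_pos hm_even (Or.inr hdvd)
    omega
  -- Step B : every orderOf (w i) has 2-adic valuation exactly a = c + 1
  have hB : ∀ i, (orderOf (w i)).factorization 2 = a := by
    intro i
    have h1 := hdw_val_le i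
    rcases hdz_val_le i with h2 | h2 <;> omega
  have haeq : a = c + 1 := by
    have h1 := hdw_val_le ⟨0, hg⟩
    rcases hdz_val_le ⟨0, hg⟩ with h2 | h2 <;> omega
  -- Step C : w i ^ m = -1 for every i
  have hC : ∀ i, w i ^ m = -1 := by
    intro i
    have hsq : (w i ^ m - 1) * (w i ^ m + 1) = 0 := by
      have hNm : m + m = N := by omega
      calc (w i ^ m - 1) * (w i ^ m + 1) = w i ^ (m + m) - 1 := by
            rw [pow_add]; ring
        _ = 0 := by rw [hNm, hN_par i, sub_self]
    rcases mul_eq_zero.mp hsq with h | h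
    · exfalso
      have h1 : w i ^ m = 1 := by linear_combination h
      have hd : orderOf (w i) ∣ m := orderOf_dvd_iff_pow_eq_one.mpr h1
      have h2 := aux_fac_le hd hm_pos.ne'
      have h3 := hB i
      omega
    · linear_combination h
  -- Step D : r * m is even, contradicting minimality of N
  have hm_even : Even (r * m) := by
    rw [Nat.even_mul]
    rcases Nat.eq_zero_or_pos c with hc0 | hc1
    · -- M is odd, so r is even
      left
      rcases Nat.even_mul.mp hM_even with h | h
      · exact h
      · exfalso
        have h1 : 1 ≤ M.factorization 2 :=
          (Nat.Prime.dvd_iff_one_le_factorization Nat.prime_two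
            hM_pos.ne').mp h.two_dvd
        omega
    · -- m is even
      right
      have h2m : 2 ∣ m :=
        (Nat.Prime.dvd_iff_one_le_factorization Nat.prime_two hm_pos.ne').mpr
          (by omega)
      obtain ⟨k, hk⟩ := h2m
      exact ⟨k, by omega⟩
  have := hN_min m hm_pos hm_even (Or.inl hC)
  omega
end

section
/- Let r and g be positive integers and let z, w, λ : Fin g → ℂ satisfy w i = λ i * z i for all i. Suppose M is the least positive integer m such that r·m is even and either (z i)^m = −1 for all i or (z i)^m = 1 for all i, with (z i)^M = −1 for all i; and suppose N is the least positive integer m such that r·m is even and either (w i)^m = −1 for all i or (w i)^m = 1 for all i, with (w i)^N = 1 for all i. If T is a positive integer with (λ i)^T = 1 for all i, then T is even. -/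
/-- Corollary 4.11(3): if `A/K` and its twist `A'/K` have different parities, then
the order `T` of the twist is even. -/
theorem stmt5 (r g : ℕ) (hr : 0 < r) (hg : 0 < g)
    (z w l : Fin g → ℂ) (hw : ∀ i, w i = l i * z i)
    (M : ℕ) (hM_pos : 0 < M) (hM_even : Even (r * M))
    (hM_prop : (∀ i, z i ^ M = -1) ∨ (∀ i, z i ^ M = 1))
    (hM_min : ∀ m : ℕ, 0 < m → Even (r * m) →
      ((∀ i, z i ^ m = -1) ∨ (∀ i, z i ^ m = 1)) → M ≤ m)
    (hM_par : ∀ i, z i ^ M = -1)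
    (N : ℕ) (hN_pos : 0 < N) (hN_even : Even (r * N))
    (hN_prop : (∀ i, w i ^ N = -1) ∨ (∀ i, w i ^ N = 1))
    (hN_min : ∀ m : ℕ, 0 < m → Even (r * m) →
      ((∀ i, w i ^ m = -1) ∨ (∀ i, w i ^ m = 1)) → N ≤ m)
    (hN_par : ∀ i, w i ^ N = 1)
    (T : ℕ) (hT_pos : 0 < T) (hT : ∀ i, (l i) ^ T = 1) :
    Even T := by
  by_contra hodd
  rw [Nat.not_even_iff_odd] at hodd
  have i0 : Fin g := ⟨0, hg⟩
  -- w i is nonzero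
  have hw0 : ∀ i, w i ≠ 0 := by
    intro i h
    have := hN_par i
    rw [h, zero_pow hN_pos.ne'] at this
    exact zero_ne_one this
  -- w ^ (M*T) = -1
  have hwMT : ∀ i, w i ^ (M * T) = -1 := by
    intro i
    have h1 : l i ^ (M * T) = 1 := by rw [mul_comm, pow_mul, hT i, one_pow]
    have h2 : z i ^ (M * T) = -1 := by rw [pow_mul, hM_par i, hodd.neg_one_pow]
    rw [hw i, mul_pow, h1, h2, one_mul]
  set d := Nat.gcd N (M * T) with hd
  have hdpos : 0 < d := Nat.gcd_pos_of_pos_left _ hN_pos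
  have hdvdN : d ∣ N := Nat.gcd_dvd_left _ _
  have hdvdMT : d ∣ M * T := Nat.gcd_dvd_right _ _
  -- Bezout
  set a : ℤ := Int.gcdA (N : ℤ) ((M * T : ℕ) : ℤ) with ha
  set b : ℤ := Int.gcdB (N : ℤ) ((M * T : ℕ) : ℤ) with hb
  have hbez : (d : ℤ) = (N : ℤ) * a + ((M * T : ℕ) : ℤ) * b := by
    have := Int.gcd_eq_gcd_ab (N : ℤ) ((M * T : ℕ) : ℤ)
    rw [Int.gcd_natCast_natCast] at this
    exact this
  have key : ∀ i, w i ^ (d : ℤ) = (-1 : ℂ) ^ b := by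
    intro i
    rw [hbez, zpow_add₀ (hw0 i), zpow_mul, zpow_mul,
      zpow_natCast, zpow_natCast, hN_par i, hwMT i, one_zpow, one_mul]
  -- r * d is even
  have hrd : Even (r * d) := by
    rcases Nat.even_or_odd r with hre | hro
    · exact hre.mul_right d
    · have hNe : Even N := by
        rcases Nat.even_mul.mp hN_even with h | h
        · exact absurd h (Nat.not_even_iff_odd.mpr hro)
        · exact h
      have hMe : Even M := by
        rcases Nat.even_mul.mp hM_even with h | h
        · exact absurd h (Nat.not_even_iff_odd.mpr hro)
        · exact h
      have hde : Even d := by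
        have : (2 : ℕ) ∣ d := Nat.dvd_gcd hNe.two_dvd (hMe.two_dvd.mul_right T)
        exact even_iff_two_dvd.mpr this
      exact hde.mul_left r
  -- d is admissible, so N ≤ d
  have hNd : N ≤ d := by
    apply hN_min d hdpos hrd
    rcases Int.even_or_odd b with hbe | hbo
    · right
      intro i
      have := key i
      rw [hbe.neg_one_zpow, zpow_natCast] at this
      exact this
    · left
      intro i
      have := key i
      rw [hbo.neg_one_zpow, zpow_natCast] at this
      exact this
  have hdN : d = N := le_antisymm (Nat.le_of_dvd hN_pos hdvdN) hNd
  -- N ∣ M*T, contradiction with w^(MT) = -1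
  obtain ⟨k, hk⟩ : N ∣ M * T := hdN ▸ hdvdMT
  have h1 : w i0 ^ (M * T) = 1 := by rw [hk, pow_mul, hN_par i0, one_pow]
  rw [hwMT i0] at h1
  exact (by norm_num : (-1 : ℂ) ≠ 1) h1
end

section
/- Let s be a positive integer with s ≡ 0 (mod 4), and let p be a prime with p ≡ −1 (mod s). Let F be a finite field with p² elements. Then the number of points of the projective plane over F lying on the Fermat curve x^s + y^s + z^s = 0 — i.e. the cardinality of the set of points of the projectivization of F³ represented by nonzero vectors (x,y,z) with x^s + y^s + z^s = 0 — equals p² + 1 + (s−1)(s−2)·p. -/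
open Finset Polynomial

section FermatCount
variable {F : Type*} [Field F] [Fintype F] [DecidableEq F]
variable {p s d : ℕ}

lemma card_pow_le' (n : ℕ) (hn : 0 < n) (c : F) :
    (univ.filter fun x : F => x ^ n = c).card ≤ n := by
  calc (univ.filter fun x : F => x ^ n = c).card
      ≤ (nthRoots n c).toFinset.card := Finset.card_le_card (fun x hx => by
        simp only [Multiset.mem_toFinset, mem_nthRoots hn]
        exact (mem_filter.mp hx).2)
    _ ≤ Multiset.card (nthRoots n c) := (nthRoots n c).toFinset_card_le
    _ ≤ n := Polynomial.card_nthRoots n c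
lemma pow_counts (n m : ℕ) (hn : 0 < n) (hm : 0 < m) (h : n * m = Fintype.card F - 1) :
    ((univ.filter fun x : F => x ^ n = 1).card = n) ∧
      (∀ a : F, a ^ m = 1 → ∃ z : F, z ^ n = a) := by
  classical
  set φ : Fˣ →* Fˣ := powMonoidHom n with hφ
  -- injection of kernel into the n-th roots subtype
  have hker_le : Nat.card φ.ker ≤ (univ.filter fun x : F => x ^ n = 1).card := by
    rw [Nat.card_eq_fintype_card, ← Fintype.card_subtype]
    refine Fintype.card_le_of_injective
      (fun u => ⟨((u : Fˣ) : F), by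
        have := u.2
        simp only [hφ, MonoidHom.mem_ker, powMonoidHom_apply] at this
        simpa using congrArg (Units.val) this⟩) ?_
    intro a b hab
    exact Subtype.ext (Units.ext (congrArg Subtype.val hab))
  have hrange_le : Nat.card φ.range ≤ (univ.filter fun x : F => x ^ m = 1).card := by
    rw [Nat.card_eq_fintype_card, ← Fintype.card_subtype]
    refine Fintype.card_le_of_injective
      (fun u => ⟨((u : Fˣ) : F), by
        obtain ⟨v, hv⟩ := u.2
        have : ((u : Fˣ) : F) = (v : F) ^ n := by
          rw [← hv]; simp [hφ]
        rw [this, ← pow_mul, h]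
        exact FiniteField.pow_card_sub_one_eq_one _ (Units.ne_zero v)⟩) ?_
    intro a b hab
    exact Subtype.ext (Units.ext (congrArg Subtype.val hab))
  have hprod : Nat.card φ.range * Nat.card φ.ker = n * m := by
    have h1 := Subgroup.card_eq_card_quotient_mul_card_subgroup φ.ker
    have h2 : Nat.card (Fˣ ⧸ φ.ker) = Nat.card φ.range :=
      Nat.card_congr (QuotientGroup.quotientKerEquivRange φ).toEquiv
    have h3 : Nat.card Fˣ = Fintype.card F - 1 := by
      rw [Nat.card_eq_fintype_card, Fintype.card_units]
    rw [h2, h3] at h1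
    omega
  have hkn : Nat.card φ.ker ≤ n := hker_le.trans (card_pow_le' n hn 1)
  have hrm : Nat.card φ.range ≤ m := hrange_le.trans (card_pow_le' m hm 1)
  have hker_eq : Nat.card φ.ker = n := by nlinarith [Nat.card_pos (α := φ.ker), Nat.card_pos (α := φ.range)]
  have hrange_eq : Nat.card φ.range = m := by nlinarith [Nat.card_pos (α := φ.ker), Nat.card_pos (α := φ.range)]
  constructor
  · exact le_antisymm (card_pow_le' n hn 1) (hker_eq ▸ hker_le)
  · intro a ha
    have ha0 : a ≠ 0 := by
      rintro rfl
      simp [zero_pow hm.ne'] at ha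
    set ua : Fˣ := Units.mk0 a ha0 with hua
    -- the injection from range to the m-th roots of unity subtype is bijective
    set f : φ.range → {u : Fˣ // (u : Fˣ) ^ m = 1} := fun u => ⟨(u : Fˣ), by
      obtain ⟨v, hv⟩ := u.2
      have : ((u : Fˣ) : F) = (v : F) ^ n := by rw [← hv]; simp [hφ]
      refine Units.ext ?_
      push_cast
      rw [this, ← pow_mul, h]
      exact FiniteField.pow_card_sub_one_eq_one _ (Units.ne_zero v)⟩ with hf
    have hfinj : Function.Injective f := by
      intro u v huv
      exact Subtype.ext (by simpa [hf] using congrArg Subtype.val huv)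
    have hcards : Fintype.card φ.range = Fintype.card {u : Fˣ // (u : Fˣ) ^ m = 1} := by
      have hle : Fintype.card {u : Fˣ // (u : Fˣ) ^ m = 1} ≤ m := by
        have : Fintype.card {u : Fˣ // (u : Fˣ) ^ m = 1}
            ≤ (univ.filter fun x : F => x ^ m = 1).card := by
          rw [← Fintype.card_subtype]
          refine Fintype.card_le_of_injective (fun u => ⟨((u : Fˣ) : F), by
            have := u.2
            simpa using congrArg (Units.val) this⟩) ?_
          intro a b hab
          exact Subtype.ext (Units.ext (congrArg Subtype.val hab))
        exact this.trans (card_pow_le' m hm 1)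
      have hge : m ≤ Fintype.card φ.range := by
        rw [← Nat.card_eq_fintype_card, hrange_eq]
      exact le_antisymm (Fintype.card_le_of_injective f hfinj) (le_trans hle hge)
    have hbij : Function.Bijective f :=
      (Fintype.bijective_iff_injective_and_card f).2 ⟨hfinj, hcards⟩
    have hmem : ua ^ m = 1 := Units.ext (by push_cast; exact ha)
    obtain ⟨⟨u, hu⟩, hufu⟩ := hbij.2 ⟨ua, hmem⟩
    obtain ⟨v, hv⟩ := hu
    refine ⟨(v : F), ?_⟩
    have : (u : Fˣ) = ua := by simpa [hf] using congrArg Subtype.val hufu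
    have : (v : F) ^ n = (ua : F) := by
      rw [← this, ← hv]; simp [hφ]
    simpa [hua] using this


lemma q1_aux (hp1 : 1 ≤ p) (hsd : s * d = p + 1) (hF : Fintype.card F = p ^ 2) :
    s * ((p - 1) * d) = Fintype.card F - 1 := by
  rw [hF]
  obtain ⟨pm, rfl⟩ : ∃ pm, p = pm + 1 := ⟨p - 1, by omega⟩
  have h1 : (pm + 1) ^ 2 = pm * pm + 2 * pm + 1 := by ring
  rw [h1, Nat.add_sub_cancel, Nat.add_sub_cancel,
    show s * (pm * d) = s * d * pm from by ring, hsd]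
  ring

lemma arith_aux (hp3 : 3 ≤ p) (hs4 : 4 ≤ s) (hd : 0 < d) (hsd : s * d = p + 1) :
    3 * s + s * s * (p - 2 + (d - 1) * (d - 2)) = p ^ 2 + 1 + (s - 1) * (s - 2) * p := by
  rcases Nat.lt_or_ge d 2 with h2 | h2
  · have hd1 : d = 1 := by omega
    subst hd1
    have hsp : s = p + 1 := by omega
    subst hsp
    zify [show 2 ≤ p by omega, show 1 ≤ p + 1 by omega, show 2 ≤ p + 1 by omega]
    ring
  · zify [show 2 ≤ p by omega, show 1 ≤ s by omega, show 2 ≤ s by omega,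
      show 1 ≤ d by omega, show 2 ≤ d by omega]
    have hsd' : (s : ℤ) * d = p + 1 := by exact_mod_cast hsd
    linear_combination ((s : ℤ) * d + p + 1 - 3 * s) * hsd'

lemma charP_aux (hp : p.Prime) (hF : Fintype.card F = p ^ 2) : CharP F p := by
  obtain ⟨n, hr, hq⟩ := FiniteField.card F (ringChar F)
  have hdvd : ringChar F ∣ p ^ 2 := by
    rw [← hF, hq]
    exact dvd_pow_self _ (by positivity)
  have : ringChar F = p :=
    (Nat.prime_dvd_prime_iff_eq hr hp).1 (hr.dvd_of_dvd_pow hdvd)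
  exact this ▸ ringChar.charP F


lemma card_fixed [Fact p.Prime] [CharP F p] :
    (univ.filter fun x : F => x ^ p = x).card = p := by
  have hp : 1 < p := (Fact.out : p.Prime).one_lt
  refine le_antisymm ?_ ?_
  · -- roots of X^p - X
    have hne : (X ^ p - X : F[X]) ≠ 0 := by
      intro h
      have := congrArg natDegree h
      rw [natDegree_zero, natDegree_sub_eq_left_of_natDegree_lt (by
        simpa [natDegree_X_pow] using hp), natDegree_X_pow] at this
      omega
    calc (univ.filter fun x : F => x ^ p = x).card
        ≤ (X ^ p - X : F[X]).roots.toFinset.card := by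
          refine Finset.card_le_card fun x hx => ?_
          rw [Multiset.mem_toFinset, mem_roots hne]
          simp only [IsRoot.def, eval_sub, eval_pow, eval_X]
          have := (mem_filter.mp hx).2
          rw [this, sub_self]
      _ ≤ Multiset.card (X ^ p - X : F[X]).roots := (Multiset.toFinset_card_le _)
      _ ≤ (X ^ p - X : F[X]).natDegree := card_roots' _
      _ = p := by
          rw [natDegree_sub_eq_left_of_natDegree_lt (by simpa [natDegree_X_pow] using hp),
            natDegree_X_pow]
  · -- image of ZMod p
    have hinj : Function.Injective (ZMod.castHom (dvd_refl p) F) := ZMod.castHom_injective F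
    calc p = Fintype.card (ZMod p) := (ZMod.card p).symm
      _ = (univ : Finset (ZMod p)).card := Finset.card_univ.symm
      _ = ((univ : Finset (ZMod p)).image (ZMod.castHom (dvd_refl p) F)).card :=
          (Finset.card_image_of_injective _ hinj).symm
      _ ≤ (univ.filter fun x : F => x ^ p = x).card := by
          refine Finset.card_le_card fun x hx => ?_
          obtain ⟨k, _, rfl⟩ := Finset.mem_image.mp hx
          rw [mem_filter]
          refine ⟨mem_univ _, ?_⟩
          rw [← map_pow, ZMod.pow_card]

lemma T_card [Fact p.Prime] [CharP F p] (hpodd : Odd p)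
    (hsd : s * d = p + 1) (hs : 0 < s) (hd : 0 < d)
    (hmu : (univ.filter fun z : F => z ^ d = 1).card = d) :
    (univ.filter fun u : F => (u ^ d) ^ p = u ^ d ∧ ((1 + u) ^ d) ^ p = (1 + u) ^ d).card
      = p + (d - 1) * (d - 2) := by
  rw [← Finset.card_filter_add_card_filter_not (s := univ.filter _)
    (p := fun u : F => u ^ p = u)]
  congr 1
  · -- fixed points part
    have : ((univ.filter fun u : F =>
        (u ^ d) ^ p = u ^ d ∧ ((1 + u) ^ d) ^ p = (1 + u) ^ d).filter fun u => u ^ p = u)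
        = univ.filter fun x : F => x ^ p = x := by
      rw [Finset.filter_filter]
      refine Finset.filter_congr fun u _ => ?_
      constructor
      · rintro ⟨-, h⟩; exact h
      · intro h
        have h1 : (1 + u) ^ p = 1 + u := by
          rw [add_pow_char, one_pow, h]
        refine ⟨⟨?_, ?_⟩, h⟩
        · rw [← pow_mul, mul_comm, pow_mul, h]
        · rw [← pow_mul, mul_comm, pow_mul, h1]
    rw [this, card_fixed]
  · -- moving part: bijection with pairs of d-th roots of unity
    have hp2 : 2 ≤ p := (Fact.out : p.Prime).two_le
    set μ := univ.filter fun z : F => z ^ d = 1 with hμ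
    have h1μ : (1 : F) ∈ μ := by simp [hμ]
    have hcard : ((μ.erase 1).offDiag).card = (d - 1) * (d - 2) := by
      have h2 : (μ.erase 1).card = d - 1 := by rw [Finset.card_erase_of_mem h1μ, hmu]
      rw [Finset.offDiag_card, h2, ← Nat.mul_pred]
      congr 1 <;> omega
    rw [← hcard]
    refine Finset.card_nbij' (fun u => (u ^ p * u⁻¹, (1 + u ^ p) * (1 + u)⁻¹))
      (fun zx => (zx.2 - 1) * (zx.1 - zx.2)⁻¹) ?_ ?_ ?_ ?_
    · -- forward membership
      intro u hu
      simp only [Finset.mem_coe, mem_filter, mem_univ, true_and] at hu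
      obtain ⟨⟨hc1, hc2⟩, hne⟩ := hu
      have hu0 : u ≠ 0 := by
        rintro rfl
        exact hne (by rw [zero_pow (by omega)])
      have h1u : (1 : F) + u ≠ 0 := by
        intro h
        have : u = -1 := by linear_combination h
        subst this
        exact hne (hpodd.neg_one_pow)
      have hfr : (1 + u) ^ p = 1 + u ^ p := by rw [add_pow_char, one_pow]
      rw [Finset.mem_coe, Finset.mem_offDiag]
      refine ⟨?_, ?_, ?_⟩
      · rw [Finset.mem_erase, hμ, mem_filter]
        refine ⟨?_, mem_univ _, ?_⟩
        · intro h
          apply hne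
          field_simp at h
          exact h
        · rw [mul_pow, inv_pow, ← pow_mul, mul_comm p d, pow_mul, hc1,
            mul_inv_cancel₀ (pow_ne_zero _ hu0)]
      · rw [Finset.mem_erase, hμ, mem_filter]
        refine ⟨?_, mem_univ _, ?_⟩
        · intro h
          apply hne
          field_simp at h
          linear_combination h
        · rw [mul_pow, inv_pow, ← hfr, ← pow_mul, mul_comm p d, pow_mul, hc2,
            mul_inv_cancel₀ (pow_ne_zero _ h1u)]
      · intro h
        apply hne
        field_simp at h
        linear_combination h
    · -- backward membership
      rintro ⟨ζ, ξ⟩ hzx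
      rw [Finset.mem_coe, Finset.mem_offDiag] at hzx
      obtain ⟨hζ, hξ, hζξ⟩ := hzx
      rw [Finset.mem_erase, hμ, mem_filter] at hζ hξ
      obtain ⟨hζ1, -, hζd⟩ := hζ
      obtain ⟨hξ1, -, hξd⟩ := hξ
      have hζ0 : ζ ≠ 0 := fun h => by simp [h, zero_pow hd.ne'] at hζd
      have hξ0 : ξ ≠ 0 := fun h => by simp [h, zero_pow hd.ne'] at hξd
      have hsub : ζ - ξ ≠ 0 := sub_ne_zero.2 hζξ
      have hξ1' : ξ - 1 ≠ 0 := sub_ne_zero.2 hξ1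
      set u : F := (ξ - 1) * (ζ - ξ)⁻¹ with hudef
      have hu0 : u ≠ 0 := mul_ne_zero hξ1' (inv_ne_zero hsub)
      have hζp : ζ ^ p = ζ⁻¹ := by
        have : ζ ^ (p + 1) = 1 := by
          rw [← hsd, mul_comm, pow_mul, hζd, one_pow]
        field_simp
        linear_combination this
      have hξp : ξ ^ p = ξ⁻¹ := by
        have : ξ ^ (p + 1) = 1 := by
          rw [← hsd, mul_comm, pow_mul, hξd, one_pow]
        field_simp
        linear_combination this
      have hξζ : ξ - ζ ≠ 0 := sub_ne_zero.2 fun h => hζξ h.symm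
      have key1 : u ^ p = ζ * u := by
        have hfrs : (ξ - 1) ^ p = ξ ^ p - 1 := by rw [sub_pow_char, one_pow]
        have hfrs2 : (ζ - ξ) ^ p = ζ ^ p - ξ ^ p := by rw [sub_pow_char]
        have e3 : (ξ - ζ)⁻¹ = -(ζ - ξ)⁻¹ := by rw [← neg_sub, inv_neg]
        rw [hudef, mul_pow, inv_pow, hfrs, hfrs2, hζp, hξp, inv_sub_inv hζ0 hξ0,
          div_eq_mul_inv, mul_inv, inv_inv, e3]
        field_simp
        ring
      have key2 : 1 + u ^ p = ξ * (1 + u) := by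
        rw [key1, hudef]
        field_simp
        ring
      have h1u : (1 : F) + u ≠ 0 := by
        intro h
        have hu : u = -1 := by linear_combination h
        rw [h, mul_zero, key1, hu] at key2
        exact hζ1 (by linear_combination -key2)
      simp only [Finset.mem_coe, mem_filter, mem_univ, true_and]
      refine ⟨⟨?_, ?_⟩, ?_⟩
      · rw [← pow_mul, mul_comm d p, pow_mul, key1, mul_pow, hζd, one_mul]
      · rw [← pow_mul, mul_comm d p, pow_mul, add_pow_char, one_pow, key2, mul_pow, hξd, one_mul]
      · intro h
        rw [key1] at h
        have : (ζ - 1) * u = 0 := by linear_combination h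
        rcases mul_eq_zero.mp this with h' | h'
        · exact hζ1 (by linear_combination h')
        · exact hu0 h'
    · -- left inverse
      intro u hu
      simp only [Finset.mem_coe, mem_filter, mem_univ, true_and] at hu
      obtain ⟨⟨hc1, hc2⟩, hne⟩ := hu
      have hu0 : u ≠ 0 := by
        rintro rfl
        exact hne (by rw [zero_pow (by omega)])
      have h1u : (1 : F) + u ≠ 0 := by
        intro h
        have : u = -1 := by linear_combination h
        subst this
        exact hne (hpodd.neg_one_pow)
      have hne' : u ^ p - u ≠ 0 := sub_ne_zero.2 hne
      show ((1 + u ^ p) * (1 + u)⁻¹ - 1) * (u ^ p * u⁻¹ - (1 + u ^ p) * (1 + u)⁻¹)⁻¹ = u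
      have hden : u ^ p * u⁻¹ - (1 + u ^ p) * (1 + u)⁻¹ = (u ^ p - u) * (u * (1 + u))⁻¹ := by
        field_simp
        ring
      rw [hden]
      have hd0 : (u ^ p - u) * (u * (1 + u))⁻¹ ≠ 0 :=
        mul_ne_zero hne' (inv_ne_zero (mul_ne_zero hu0 h1u))
      field_simp
      ring
    · -- right inverse
      rintro ⟨ζ, ξ⟩ hzx
      rw [Finset.mem_coe, Finset.mem_offDiag] at hzx
      obtain ⟨hζ, hξ, hζξ⟩ := hzx
      rw [Finset.mem_erase, hμ, mem_filter] at hζ hξ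
      obtain ⟨hζ1, -, hζd⟩ := hζ
      obtain ⟨hξ1, -, hξd⟩ := hξ
      have hζ0 : ζ ≠ 0 := fun h => by simp [h, zero_pow hd.ne'] at hζd
      have hξ0 : ξ ≠ 0 := fun h => by simp [h, zero_pow hd.ne'] at hξd
      have hsub : ζ - ξ ≠ 0 := sub_ne_zero.2 hζξ
      have hξ1' : ξ - 1 ≠ 0 := sub_ne_zero.2 hξ1
      set u : F := (ξ - 1) * (ζ - ξ)⁻¹ with hudef
      have hu0 : u ≠ 0 := mul_ne_zero hξ1' (inv_ne_zero hsub)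
      have hζp : ζ ^ p = ζ⁻¹ := by
        have : ζ ^ (p + 1) = 1 := by
          rw [← hsd, mul_comm, pow_mul, hζd, one_pow]
        field_simp
        linear_combination this
      have hξp : ξ ^ p = ξ⁻¹ := by
        have : ξ ^ (p + 1) = 1 := by
          rw [← hsd, mul_comm, pow_mul, hξd, one_pow]
        field_simp
        linear_combination this
      have hξζ : ξ - ζ ≠ 0 := sub_ne_zero.2 fun h => hζξ h.symm
      have key1 : u ^ p = ζ * u := by
        have hfrs : (ξ - 1) ^ p = ξ ^ p - 1 := by rw [sub_pow_char, one_pow]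
        have hfrs2 : (ζ - ξ) ^ p = ζ ^ p - ξ ^ p := by rw [sub_pow_char]
        have e3 : (ξ - ζ)⁻¹ = -(ζ - ξ)⁻¹ := by rw [← neg_sub, inv_neg]
        rw [hudef, mul_pow, inv_pow, hfrs, hfrs2, hζp, hξp, inv_sub_inv hζ0 hξ0,
          div_eq_mul_inv, mul_inv, inv_inv, e3]
        field_simp
        ring
      have key2 : 1 + u ^ p = ξ * (1 + u) := by
        rw [key1, hudef]
        field_simp
        ring
      have h1u : (1 : F) + u ≠ 0 := by
        intro h
        have hu : u = -1 := by linear_combination h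
        rw [h, mul_zero, key1, hu] at key2
        exact hζ1 (by linear_combination -key2)
      have e1 : u ^ p * u⁻¹ = ζ := by rw [key1]; field_simp
      have e2 : (1 + u ^ p) * (1 + u)⁻¹ = ξ := by rw [key2]; field_simp
      show (u ^ p * u⁻¹, (1 + u ^ p) * (1 + u)⁻¹) = (ζ, ξ)
      rw [Prod.mk.injEq]
      exact ⟨e1, e2⟩



lemma A0_card [Fact p.Prime] [CharP F p] (hpodd : Odd p) (hp3 : 3 ≤ p)
    (hF : Fintype.card F = p ^ 2) (hsd : s * d = p + 1) (hs : 0 < s) (hd : 0 < d) :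
    (univ.filter fun w : F × F × F => w.1 ^ s + w.2.1 ^ s + w.2.2 ^ s = 0).card
      = 1 + (Fintype.card F - 1) * (3 * s + s * s * (p - 2 + (d - 1) * (d - 2))) := by
  have hp1 : 1 ≤ p := by omega
  have hpm : 0 < (p - 1) * d := Nat.mul_pos (by omega) hd
  have hq1 : s * ((p - 1) * d) = Fintype.card F - 1 := q1_aux hp1 hsd hF
  have hq1d : d * ((p - 1) * s) = Fintype.card F - 1 := by rw [← hq1]; ring
  have hpms : 0 < (p - 1) * s := Nat.mul_pos (by omega) hs
  obtain ⟨hμs, hex⟩ := pow_counts s ((p - 1) * d) hs hpm hq1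
  obtain ⟨hμd, -⟩ := pow_counts d ((p - 1) * s) hd hpms hq1d
  have hT := T_card (F := F) hpodd hsd hs hd hμd
  have hSiff : ∀ a : F, a ≠ 0 → ((a ^ d) ^ p = a ^ d ↔ ∃ z : F, z ^ s = a) := by
    intro a ha
    constructor
    · intro h
      refine hex a ?_
      have h1 : a ^ d ≠ 0 := pow_ne_zero _ ha
      have h3 : (a ^ d) ^ (p - 1) * a ^ d = 1 * a ^ d := by
        rw [one_mul, ← pow_succ, show p - 1 + 1 = p from by omega, h]
      have h2 : (a ^ d) ^ (p - 1) = 1 := mul_right_cancel₀ h1 h3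
      calc a ^ ((p - 1) * d) = (a ^ d) ^ (p - 1) := by rw [← pow_mul, mul_comm]
        _ = 1 := h2
    · rintro ⟨z, rfl⟩
      have hz2 : z ^ p ^ 2 = z := by rw [← hF]; exact FiniteField.pow_card z
      calc ((z ^ s) ^ d) ^ p = z ^ (p ^ 2 + p) := by
            rw [← pow_mul, ← pow_mul, show s * (d * p) = s * d * p from by ring, hsd]
            congr 1; ring
        _ = z ^ p ^ 2 * z ^ p := pow_add z _ _
        _ = z ^ (1 + p) := by rw [hz2, pow_add, pow_one]
        _ = (z ^ s) ^ d := by rw [← pow_mul, hsd]; congr 1; ring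
  have hcount : ∀ c : F, c ≠ 0 → (∃ z : F, z ^ s = c) →
      (univ.filter fun x : F => x ^ s = c).card = s := by
    rintro c hc0 ⟨z0, hz0⟩
    have hz00 : z0 ≠ 0 := fun h => hc0 (by rw [← hz0, h, zero_pow hs.ne'])
    have hbj : (univ.filter fun x : F => x ^ s = c).card
        = (univ.filter fun x : F => x ^ s = 1).card := by
      refine Finset.card_nbij' (fun x => z0⁻¹ * x) (fun t => z0 * t) ?_ ?_ ?_ ?_
      · intro x hx
        simp only [Finset.mem_coe, mem_filter, mem_univ, true_and] at hx ⊢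
        rw [mul_pow, inv_pow, hz0, hx, inv_mul_cancel₀ hc0]
      · intro t ht
        simp only [Finset.mem_coe, mem_filter, mem_univ, true_and] at ht ⊢
        rw [mul_pow, hz0, ht, mul_one]
      · intro x _
        exact mul_inv_cancel_left₀ hz00 x
      · intro t _
        exact inv_mul_cancel_left₀ hz00 t
    rw [hbj, hμs]
  have hneg1 : ∃ z : F, z ^ s = -1 := by
    refine hex (-1) ?_
    have he : Even ((p - 1) * d) := (Nat.Odd.sub_odd hpodd odd_one).mul_right d
    exact he.neg_one_pow
  have hW : (univ.filter fun t : F => t ^ s = -1).card = s :=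
    hcount (-1) (neg_ne_zero.2 one_ne_zero) hneg1
  have hneg1p : ((-1 : F) ^ d) ^ p = (-1) ^ d := by
    rcases neg_one_pow_eq_or F d with h | h <;> rw [h] <;>
      simp [hpodd.neg_one_pow]
  have hnegd : ∀ x : F, (((-x) ^ d) ^ p = (-x) ^ d) ↔ ((x ^ d) ^ p = x ^ d) := by
    intro x
    rw [neg_pow, mul_pow, hneg1p]
    constructor
    · intro h
      exact mul_left_cancel₀ (pow_ne_zero _ (neg_ne_zero.2 one_ne_zero)) h
    · intro h
      rw [h]
  have hM : (univ.filter fun ab : F × F =>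
      (ab.1 ≠ 0 ∧ (ab.1 ^ d) ^ p = ab.1 ^ d) ∧ (ab.2 ≠ 0 ∧ (ab.2 ^ d) ^ p = ab.2 ^ d)
        ∧ ab.1 + ab.2 + 1 = 0).card = p - 2 + (d - 1) * (d - 2) := by
    have h0T : (0 : F) ∈ univ.filter fun u : F =>
        (u ^ d) ^ p = u ^ d ∧ ((1 + u) ^ d) ^ p = (1 + u) ^ d := by
      rw [mem_filter]
      refine ⟨mem_univ _, ?_, ?_⟩
      · rw [zero_pow hd.ne', zero_pow (show p ≠ 0 by omega)]
      · rw [show (1 : F) + 0 = 1 from by ring, one_pow, one_pow]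
    have hm1T : (-1 : F) ∈ (univ.filter fun u : F =>
        (u ^ d) ^ p = u ^ d ∧ ((1 + u) ^ d) ^ p = (1 + u) ^ d).erase 0 := by
      rw [mem_erase, mem_filter]
      refine ⟨neg_ne_zero.2 one_ne_zero, mem_univ _, hneg1p, ?_⟩
      rw [show (1 : F) + -1 = 0 from by ring, zero_pow hd.ne',
        zero_pow (show p ≠ 0 by omega)]
    have hcard' : (((univ.filter fun u : F =>
        (u ^ d) ^ p = u ^ d ∧ ((1 + u) ^ d) ^ p = (1 + u) ^ d).erase 0).erase (-1)).card
          = p - 2 + (d - 1) * (d - 2) := by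
      rw [Finset.card_erase_of_mem hm1T, Finset.card_erase_of_mem h0T, hT]
      omega
    rw [← hcard']
    refine Finset.card_nbij' (fun ab => ab.1) (fun u => (u, -1 - u)) ?_ ?_ ?_ ?_
    · rintro ⟨a, b⟩ hab
      simp only [Finset.mem_coe, mem_filter, mem_univ, true_and] at hab
      obtain ⟨⟨ha0, ha⟩, ⟨hb0, hb⟩, hsum⟩ := hab
      have hb' : b = -(1 + a) := by linear_combination hsum
      rw [Finset.mem_coe, mem_erase, mem_erase, mem_filter]
      refine ⟨?_, ha0, mem_univ _, ha, ?_⟩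
      · intro h
        apply hb0
        rw [hb', show a = -1 from h]
        ring
      · rw [hb'] at hb
        exact (hnegd (1 + a)).mp hb
    · intro u hu
      rw [Finset.mem_coe, mem_erase, mem_erase, mem_filter] at hu
      obtain ⟨hu1, hu0, -, hc1, hc2⟩ := hu
      simp only [Finset.mem_coe, mem_filter, mem_univ, true_and]
      refine ⟨⟨hu0, hc1⟩, ⟨?_, ?_⟩, by ring⟩
      · intro h
        apply hu1
        linear_combination -h
      · rw [show (-1 : F) - u = -(1 + u) from by ring]
        exact (hnegd (1 + u)).mpr hc2
    · rintro ⟨a, b⟩ hab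
      simp only [Finset.mem_coe, mem_filter, mem_univ, true_and] at hab
      show ((a, -1 - a) : F × F) = (a, b)
      rw [Prod.mk.injEq]
      exact ⟨rfl, by linear_combination -hab.2.2⟩
    · intro u hu
      rfl
  have hB : (univ.filter fun w : F × F => w.1 ^ s + w.2 ^ s = 0).card
      = 1 + s * (Fintype.card F - 1) := by
    rw [← Finset.card_filter_add_card_filter_not
      (s := univ.filter fun w : F × F => w.1 ^ s + w.2 ^ s = 0) (p := fun w => w.2 = 0)]
    congr 1
    · rw [Finset.card_eq_one]
      refine ⟨(0, 0), ?_⟩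
      ext ⟨a, b⟩
      simp only [mem_filter, mem_univ, true_and, mem_singleton, Prod.mk.injEq]
      constructor
      · rintro ⟨heq, h2⟩
        refine ⟨?_, h2⟩
        rw [h2, zero_pow hs.ne', add_zero] at heq
        exact pow_eq_zero_iff hs.ne' |>.mp heq
      · rintro ⟨rfl, rfl⟩
        simp [zero_pow hs.ne']
    · have hbij : ((univ.filter fun w : F × F => w.1 ^ s + w.2 ^ s = 0).filter
          fun w => ¬ w.2 = 0).card
          = ((univ.filter fun t : F => t ^ s = -1) ×ˢ (univ.erase (0 : F))).card := by
        refine Finset.card_nbij' (fun w => (w.1 * w.2⁻¹, w.2)) (fun z => (z.1 * z.2, z.2))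
          ?_ ?_ ?_ ?_
        · rintro ⟨a, b⟩ hab
          simp only [Finset.mem_coe, mem_filter, mem_univ, true_and, Finset.mem_product,
            Finset.mem_erase] at hab ⊢
          obtain ⟨heq, h2⟩ := hab
          refine ⟨?_, h2, trivial⟩
          rw [mul_pow, inv_pow, show a ^ s = -b ^ s from by linear_combination heq, neg_mul,
            mul_inv_cancel₀ (pow_ne_zero _ h2)]
        · rintro ⟨t, y⟩ hty
          simp only [Finset.mem_coe, mem_filter, mem_univ, true_and, Finset.mem_product,
            Finset.mem_erase] at hty ⊢
          obtain ⟨h1, h2, -⟩ := hty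
          refine ⟨?_, h2⟩
          rw [mul_pow, h1]
          ring
        · rintro ⟨a, b⟩ hab
          simp only [Finset.mem_coe, mem_filter, mem_univ, true_and] at hab
          show ((a * b⁻¹ * b, b) : F × F) = (a, b)
          rw [Prod.mk.injEq]
          exact ⟨inv_mul_cancel_right₀ hab.2 a, rfl⟩
        · rintro ⟨t, y⟩ hty
          simp only [Finset.mem_coe, Finset.mem_product, Finset.mem_erase, mem_univ, and_true] at hty
          show ((t * y * y⁻¹, y) : F × F) = (t, y)
          rw [Prod.mk.injEq]
          exact ⟨mul_inv_cancel_right₀ hty.2 t, rfl⟩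
      rw [hbij, Finset.card_product, hW, Finset.card_erase_of_mem (mem_univ 0),
        Finset.card_univ]
  have hC : (univ.filter fun w : F × F => w.1 ^ s + w.2 ^ s + 1 = 0).card
      = 2 * s + s * s * (p - 2 + (d - 1) * (d - 2)) := by
    rw [← Finset.card_filter_add_card_filter_not
      (s := univ.filter fun w : F × F => w.1 ^ s + w.2 ^ s + 1 = 0) (p := fun w => w.1 = 0),
      ← Finset.card_filter_add_card_filter_not
      (s := (univ.filter fun w : F × F => w.1 ^ s + w.2 ^ s + 1 = 0).filter
        fun w => ¬ w.1 = 0) (p := fun w => w.2 = 0)]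
    have hC1 : ((univ.filter fun w : F × F => w.1 ^ s + w.2 ^ s + 1 = 0).filter
        fun w => w.1 = 0).card = s := by
      have hbj : ((univ.filter fun w : F × F => w.1 ^ s + w.2 ^ s + 1 = 0).filter
          fun w => w.1 = 0).card = (univ.filter fun t : F => t ^ s = -1).card := by
        refine Finset.card_nbij' (fun w => w.2) (fun t => (0, t)) ?_ ?_ ?_ ?_
        · rintro ⟨a, b⟩ hab
          simp only [Finset.mem_coe, mem_filter, mem_univ, true_and] at hab ⊢
          obtain ⟨heq, h1⟩ := hab
          rw [h1, zero_pow hs.ne'] at heq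
          linear_combination heq
        · intro t ht
          simp only [Finset.mem_coe, mem_filter, mem_univ, true_and] at ht ⊢
          refine ⟨?_, trivial⟩
          rw [zero_pow hs.ne', ht]
          ring
        · rintro ⟨a, b⟩ hab
          simp only [Finset.mem_coe, mem_filter, mem_univ, true_and] at hab
          show (((0 : F), b) : F × F) = (a, b)
          rw [Prod.mk.injEq]
          exact ⟨hab.2.symm, rfl⟩
        · intro t ht
          rfl
      rw [hbj, hW]
    have hC2 : (((univ.filter fun w : F × F => w.1 ^ s + w.2 ^ s + 1 = 0).filter
        fun w => ¬ w.1 = 0).filter fun w => w.2 = 0).card = s := by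
      have hbj : (((univ.filter fun w : F × F => w.1 ^ s + w.2 ^ s + 1 = 0).filter
          fun w => ¬ w.1 = 0).filter fun w => w.2 = 0).card
            = (univ.filter fun t : F => t ^ s = -1).card := by
        refine Finset.card_nbij' (fun w => w.1) (fun t => (t, 0)) ?_ ?_ ?_ ?_
        · rintro ⟨a, b⟩ hab
          simp only [Finset.mem_coe, mem_filter, mem_univ, true_and] at hab ⊢
          obtain ⟨⟨heq, -⟩, h2⟩ := hab
          rw [h2, zero_pow hs.ne'] at heq
          linear_combination heq
        · intro t ht
          simp only [Finset.mem_coe, mem_filter, mem_univ, true_and] at ht ⊢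
          have ht0 : t ≠ 0 := by
            intro h
            rw [h, zero_pow hs.ne'] at ht
            exact neg_ne_zero.2 one_ne_zero ht.symm
          refine ⟨⟨?_, ht0⟩, trivial⟩
          rw [zero_pow hs.ne', ht]
          ring
        · rintro ⟨a, b⟩ hab
          simp only [Finset.mem_coe, mem_filter, mem_univ, true_and] at hab
          show ((a, (0 : F)) : F × F) = (a, b)
          rw [Prod.mk.injEq]
          exact ⟨rfl, hab.2.symm⟩
        · intro t ht
          rfl
      rw [hbj, hW]
    have hC3 : (((univ.filter fun w : F × F => w.1 ^ s + w.2 ^ s + 1 = 0).filter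
        fun w => ¬ w.1 = 0).filter fun w => ¬ w.2 = 0).card
          = (p - 2 + (d - 1) * (d - 2)) * (s * s) := by
      rw [Finset.card_eq_sum_card_fiberwise (f := fun w : F × F => (w.1 ^ s, w.2 ^ s))
        (t := univ.filter fun ab : F × F =>
          (ab.1 ≠ 0 ∧ (ab.1 ^ d) ^ p = ab.1 ^ d) ∧ (ab.2 ≠ 0 ∧ (ab.2 ^ d) ^ p = ab.2 ^ d)
            ∧ ab.1 + ab.2 + 1 = 0) ?_]
      · rw [Finset.sum_congr rfl (g := fun _ => s * s) ?_, Finset.sum_const, smul_eq_mul, hM]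
        rintro ⟨a, b⟩ hab
        simp only [mem_filter, mem_univ, true_and] at hab
        obtain ⟨⟨ha0, ha⟩, ⟨hb0, hb⟩, hsum⟩ := hab
        have hfib : ((((univ.filter fun w : F × F => w.1 ^ s + w.2 ^ s + 1 = 0).filter
            fun w => ¬ w.1 = 0).filter fun w => ¬ w.2 = 0).filter
              fun w => (w.1 ^ s, w.2 ^ s) = (a, b))
            = univ.filter fun w : F × F => w.1 ^ s = a ∧ w.2 ^ s = b := by
          ext ⟨u, v⟩
          simp only [mem_filter, mem_univ, true_and, Prod.mk.injEq]
          constructor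
          · rintro ⟨⟨⟨-, -⟩, -⟩, h1, h2⟩
            exact ⟨h1, h2⟩
          · rintro ⟨h1, h2⟩
            refine ⟨⟨⟨?_, ?_⟩, ?_⟩, h1, h2⟩
            · rw [h1, h2]
              linear_combination hsum
            · intro h
              rw [h, zero_pow hs.ne'] at h1
              exact ha0 h1.symm
            · intro h
              rw [h, zero_pow hs.ne'] at h2
              exact hb0 h2.symm
        rw [hfib, ← Finset.univ_product_univ,
          Finset.filter_product (fun x : F => x ^ s = a) (fun x : F => x ^ s = b),
          Finset.card_product,
          hcount a ha0 ((hSiff a ha0).mp ha), hcount b hb0 ((hSiff b hb0).mp hb)]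
      · rintro ⟨u, v⟩ hw
        simp only [Finset.mem_coe, mem_filter, mem_univ, true_and] at hw ⊢
        obtain ⟨⟨heq, h1⟩, h2⟩ := hw
        refine ⟨⟨pow_ne_zero _ h1, ?_⟩, ⟨pow_ne_zero _ h2, ?_⟩, heq⟩
        · exact (hSiff _ (pow_ne_zero _ h1)).mpr ⟨u, rfl⟩
        · exact (hSiff _ (pow_ne_zero _ h2)).mpr ⟨v, rfl⟩
    rw [hC1, hC2, hC3]
    ring
  rw [← Finset.card_filter_add_card_filter_not
    (s := univ.filter fun w : F × F × F => w.1 ^ s + w.2.1 ^ s + w.2.2 ^ s = 0)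
    (p := fun w => w.2.2 = 0)]
  have hA1 : ((univ.filter fun w : F × F × F => w.1 ^ s + w.2.1 ^ s + w.2.2 ^ s = 0).filter
      fun w => w.2.2 = 0).card = 1 + s * (Fintype.card F - 1) := by
    have hbj : ((univ.filter fun w : F × F × F =>
        w.1 ^ s + w.2.1 ^ s + w.2.2 ^ s = 0).filter fun w => w.2.2 = 0).card
        = (univ.filter fun w : F × F => w.1 ^ s + w.2 ^ s = 0).card := by
      refine Finset.card_nbij' (fun w => (w.1, w.2.1)) (fun y => (y.1, y.2, 0)) ?_ ?_ ?_ ?_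
      · rintro ⟨x, y, z⟩ h
        simp only [Finset.mem_coe, mem_filter, mem_univ, true_and] at h ⊢
        obtain ⟨heq, h2⟩ := h
        rw [h2, zero_pow hs.ne', add_zero] at heq
        exact heq
      · rintro ⟨x, y⟩ h
        simp only [Finset.mem_coe, mem_filter, mem_univ, true_and] at h ⊢
        exact ⟨by rw [zero_pow hs.ne', add_zero]; exact h, trivial⟩
      · rintro ⟨x, y, z⟩ h
        simp only [Finset.mem_coe, mem_filter, mem_univ, true_and] at h
        show ((x, y, (0 : F)) : F × F × F) = (x, y, z)
        rw [Prod.mk.injEq, Prod.mk.injEq]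
        exact ⟨rfl, rfl, h.2.symm⟩
      · rintro ⟨x, y⟩ h
        rfl
    rw [hbj, hB]
  have hA2 : ((univ.filter fun w : F × F × F => w.1 ^ s + w.2.1 ^ s + w.2.2 ^ s = 0).filter
      fun w => ¬ w.2.2 = 0).card
      = (2 * s + s * s * (p - 2 + (d - 1) * (d - 2))) * (Fintype.card F - 1) := by
    have hbij : ((univ.filter fun w : F × F × F =>
        w.1 ^ s + w.2.1 ^ s + w.2.2 ^ s = 0).filter fun w => ¬ w.2.2 = 0).card
        = ((univ.filter fun w : F × F => w.1 ^ s + w.2 ^ s + 1 = 0)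
            ×ˢ (univ.erase (0 : F))).card := by
      refine Finset.card_nbij' (fun w => ((w.1 * w.2.2⁻¹, w.2.1 * w.2.2⁻¹), w.2.2))
        (fun zt => (zt.1.1 * zt.2, zt.1.2 * zt.2, zt.2)) ?_ ?_ ?_ ?_
      · rintro ⟨x, y, z⟩ h
        simp only [Finset.mem_coe, mem_filter, mem_univ, true_and, Finset.mem_product,
          Finset.mem_erase] at h ⊢
        obtain ⟨heq, h2⟩ := h
        refine ⟨?_, h2, trivial⟩
        have hzs : z ^ s ≠ 0 := pow_ne_zero _ h2
        rw [mul_pow, mul_pow, inv_pow]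
        field_simp
        linear_combination heq
      · rintro ⟨⟨u, v⟩, t⟩ h
        simp only [Finset.mem_coe, mem_filter, mem_univ, true_and, Finset.mem_product,
          Finset.mem_erase] at h ⊢
        obtain ⟨h1, h2, -⟩ := h
        refine ⟨?_, h2⟩
        rw [mul_pow, mul_pow]
        linear_combination (t ^ s) * h1
      · rintro ⟨x, y, z⟩ h
        simp only [Finset.mem_coe, mem_filter, mem_univ, true_and] at h
        show ((x * z⁻¹ * z, y * z⁻¹ * z, z) : F × F × F) = (x, y, z)
        rw [Prod.mk.injEq, Prod.mk.injEq]
        exact ⟨inv_mul_cancel_right₀ h.2 x, inv_mul_cancel_right₀ h.2 y, rfl⟩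
      · rintro ⟨⟨u, v⟩, t⟩ h
        simp only [Finset.mem_coe, Finset.mem_product, Finset.mem_erase, mem_univ, and_true] at h
        show (((u * t * t⁻¹, v * t * t⁻¹), t) : (F × F) × F) = ((u, v), t)
        rw [Prod.mk.injEq, Prod.mk.injEq]
        exact ⟨⟨mul_inv_cancel_right₀ h.2 u, mul_inv_cancel_right₀ h.2 v⟩, rfl⟩
    rw [hbij, Finset.card_product, hC, Finset.card_erase_of_mem (mem_univ 0),
      Finset.card_univ]
  rw [hA1, hA2]
  ring

lemma proj_eq (hs : 0 < s) :
    Nat.card {P : Projectivization F (Fin 3 → F) // ∃ (v : Fin 3 → F) (hv : v ≠ 0),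
        v 0 ^ s + v 1 ^ s + v 2 ^ s = 0 ∧ P = Projectivization.mk F v hv}
      * (Fintype.card F - 1)
    = Nat.card {v : Fin 3 → F // v ≠ 0 ∧ v 0 ^ s + v 1 ^ s + v 2 ^ s = 0} := by
  have hsmul : ∀ (a : Fˣ) (v : Fin 3 → F), v 0 ^ s + v 1 ^ s + v 2 ^ s = 0 →
      (a • v) 0 ^ s + (a • v) 1 ^ s + (a • v) 2 ^ s = 0 := by
    intro a v hv
    have h : ∀ i, (a • v) i = (a : F) * v i := fun i => rfl
    rw [h 0, h 1, h 2, mul_pow, mul_pow, mul_pow, ← mul_add, ← mul_add, hv, mul_zero]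
  have hnz : ∀ (a : Fˣ) (v : Fin 3 → F), v ≠ 0 → a • v ≠ 0 := by
    intro a v hv h
    rw [Units.smul_def, smul_eq_zero] at h
    rcases h with h | h
    · exact a.ne_zero h
    · exact hv h
  have hrep : ∀ P : Projectivization F (Fin 3 → F),
      (∃ (v : Fin 3 → F) (hv : v ≠ 0),
        v 0 ^ s + v 1 ^ s + v 2 ^ s = 0 ∧ P = Projectivization.mk F v hv) →
      P.rep 0 ^ s + P.rep 1 ^ s + P.rep 2 ^ s = 0 := by
    rintro P ⟨v, hv, heq, rfl⟩
    obtain ⟨a, ha⟩ := (Projectivization.mk_eq_mk_iff F _ _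
      (Projectivization.rep_nonzero _) hv).mp (Projectivization.mk_rep _)
    rw [← ha]
    exact hsmul a v heq
  have key : Nat.card (Fˣ × {P : Projectivization F (Fin 3 → F) //
      ∃ (v : Fin 3 → F) (hv : v ≠ 0),
        v 0 ^ s + v 1 ^ s + v 2 ^ s = 0 ∧ P = Projectivization.mk F v hv})
      = Nat.card {v : Fin 3 → F // v ≠ 0 ∧ v 0 ^ s + v 1 ^ s + v 2 ^ s = 0} := by
    refine Nat.card_congr (Equiv.ofBijective
      (fun x => ⟨x.1 • (x.2 : {P : Projectivization F (Fin 3 → F) // _}).val.rep,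
        hnz x.1 _ (Projectivization.rep_nonzero _),
        hsmul x.1 _ (hrep _ x.2.2)⟩) ⟨?_, ?_⟩)
    · rintro ⟨a, P, hP⟩ ⟨b, Q, hQ⟩ hib
      have hv : a • P.rep = b • Q.rep := congrArg Subtype.val hib
      have hPQ : P = Q := by
        calc P = Projectivization.mk F P.rep (Projectivization.rep_nonzero P) :=
              (Projectivization.mk_rep P).symm
          _ = Projectivization.mk F (a • P.rep) (hnz a _ (Projectivization.rep_nonzero P)) :=
              ((Projectivization.mk_eq_mk_iff F _ _ _ _).mpr ⟨a, rfl⟩).symm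
          _ = Projectivization.mk F (b • Q.rep) (hnz b _ (Projectivization.rep_nonzero Q)) :=
              (Projectivization.mk_eq_mk_iff F _ _ _ _).mpr ⟨1, by rw [one_smul, hv]⟩
          _ = Projectivization.mk F Q.rep (Projectivization.rep_nonzero Q) :=
              (Projectivization.mk_eq_mk_iff F _ _ _ _).mpr ⟨b, rfl⟩
          _ = Q := Projectivization.mk_rep Q
      subst hPQ
      obtain ⟨i, hi⟩ : ∃ i, P.rep i ≠ 0 := Function.ne_iff.mp (Projectivization.rep_nonzero P)
      have hcomp : (a : F) * P.rep i = (b : F) * P.rep i := congrFun hv i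
      have hab : a = b := Units.ext (mul_right_cancel₀ hi hcomp)
      subst hab
      rfl
    · rintro ⟨v, hv, heq⟩
      obtain ⟨a, ha⟩ := (Projectivization.mk_eq_mk_iff F _ _
        (Projectivization.rep_nonzero _) hv).mp (Projectivization.mk_rep
          (Projectivization.mk F v hv))
      refine ⟨(a⁻¹, ⟨Projectivization.mk F v hv, ⟨v, hv, heq, rfl⟩⟩), ?_⟩
      apply Subtype.ext
      show a⁻¹ • (Projectivization.mk F v hv).rep = v
      rw [← ha, inv_smul_smul]
  rw [← key, Nat.card_prod, Nat.card_eq_fintype_card (α := Fˣ), Fintype.card_units, mul_comm]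

lemma card_sub_eq (hs : 0 < s) :
    Nat.card {v : Fin 3 → F // v ≠ 0 ∧ v 0 ^ s + v 1 ^ s + v 2 ^ s = 0}
      = (univ.filter fun w : F × F × F => w.1 ^ s + w.2.1 ^ s + w.2.2 ^ s = 0).card - 1 := by
  have e : {v : Fin 3 → F // v ≠ 0 ∧ v 0 ^ s + v 1 ^ s + v 2 ^ s = 0}
      ≃ {w : F × F × F // w ≠ 0 ∧ w.1 ^ s + w.2.1 ^ s + w.2.2 ^ s = 0} := by
    refine Equiv.subtypeEquiv
      ⟨fun v => (v 0, v 1, v 2), fun w => ![w.1, w.2.1, w.2.2], ?_, ?_⟩ ?_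
    · intro v
      funext i
      fin_cases i <;> rfl
    · intro w
      rfl
    · intro v
      have h0 : v = 0 ↔ ((v 0, v 1, v 2) : F × F × F) = 0 := by
        constructor
        · rintro rfl
          rfl
        · intro h
          rw [Prod.ext_iff, Prod.ext_iff] at h
          funext i
          fin_cases i
          · exact h.1
          · exact h.2.1
          · exact h.2.2
      exact and_congr (not_congr h0) Iff.rfl
  rw [Nat.card_congr e, Nat.card_eq_fintype_card, Fintype.card_subtype]
  have hset : (univ.filter fun w : F × F × F =>
      w ≠ 0 ∧ w.1 ^ s + w.2.1 ^ s + w.2.2 ^ s = 0)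
      = (univ.filter fun w : F × F × F => w.1 ^ s + w.2.1 ^ s + w.2.2 ^ s = 0).erase 0 := by
    ext w
    rw [mem_erase, mem_filter, mem_filter]
    constructor
    · rintro ⟨h1, h2, h3⟩
      exact ⟨h2, h1, h3⟩
    · rintro ⟨h1, h2, h3⟩
      exact ⟨h2, h1, h3⟩
  rw [hset, Finset.card_erase_of_mem]
  rw [mem_filter]
  refine ⟨mem_univ _, ?_⟩
  show (0 : F) ^ s + (0 : F) ^ s + (0 : F) ^ s = 0
  rw [zero_pow hs.ne', add_zero, add_zero]

end FermatCount

/-- Proposition 5.6 (maximality claim): for `s ≡ 0 mod 4` and a prime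
`p ≡ -1 mod s`, the Fermat curve `x^s + y^s + z^s = 0` is maximal over `𝔽_{p²}`,
i.e. its number of points in the projective plane over a field with `p²` elements
is `p² + 1 + (s-1)(s-2)p`. -/
theorem stmt9 (s : ℕ) (hs_pos : 0 < s) (hs4 : 4 ∣ s)
    (p : ℕ) (hp : p.Prime) (hps : (p : ZMod s) = -1)
    (F : Type*) [Field F] [Fintype F] (hF : Fintype.card F = p ^ 2) :
    Nat.card {P : Projectivization F (Fin 3 → F) //
        ∃ (v : Fin 3 → F) (hv : v ≠ 0),
          v 0 ^ s + v 1 ^ s + v 2 ^ s = 0 ∧ P = Projectivization.mk F v hv} =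
      p ^ 2 + 1 + (s - 1) * (s - 2) * p := by
  letI := Classical.decEq F
  haveI : Fact p.Prime := ⟨hp⟩
  haveI : NeZero s := ⟨hs_pos.ne'⟩
  have hs4' : 4 ≤ s := Nat.le_of_dvd hs_pos hs4
  have hdvd : s ∣ p + 1 := by
    have h0 : ((p + 1 : ℕ) : ZMod s) = 0 := by
      push_cast
      rw [hps]
      ring
    exact (ZMod.natCast_eq_zero_iff _ _).mp h0
  obtain ⟨d, hd'⟩ := hdvd
  have hsd : s * d = p + 1 := hd'.symm
  have hd : 0 < d := by
    rcases Nat.eq_zero_or_pos d with h | h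
    · rw [h, mul_zero] at hsd
      omega
    · exact h
  have hp2 : 2 ≤ p := hp.two_le
  have hpne2 : p ≠ 2 := by
    rintro rfl
    have : s ≤ 3 := Nat.le_of_dvd (by omega) ⟨d, hsd.symm⟩
    omega
  have hp3 : 3 ≤ p := by omega
  have hpodd : Odd p := hp.odd_of_ne_two hpne2
  haveI : CharP F p := charP_aux hp hF
  have hq : 9 ≤ Fintype.card F := by
    rw [hF]
    nlinarith [hp3]
  have h1 := proj_eq (F := F) (s := s) hs_pos
  have h2 := card_sub_eq (F := F) (s := s) hs_pos
  have h3 := A0_card (F := F) (p := p) (s := s) (d := d) hpodd hp3 hF hsd hs_pos hd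
  have h4 := arith_aux (p := p) hp3 hs4' hd hsd
  rw [h2] at h1
  rw [h3] at h1
  rw [Nat.add_sub_cancel_left] at h1
  rw [h4] at h1
  have hqpos : 0 < Fintype.card F - 1 :=
    Nat.sub_pos_of_lt (lt_of_lt_of_le (by norm_num : (1 : ℕ) < 9) hq)
  rw [mul_comm] at h1
  exact Nat.eq_of_mul_eq_mul_left hqpos h1
end

section
/- For every prime p > 5 with p ≡ 2 (mod 3), there exists t ∈ ZMod p such that t² + 4 ≠ 0 and t² + 4 is not a square in ZMod p. -/
/-- Claim in the proof of Proposition 7.3(2): for a prime `p > 5` with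
`p ≡ 2 mod 3`, there is `t ∈ 𝔽_p` with `t² + 4` a nonzero non-square. -/
theorem stmt10 (p : ℕ) (hp : p.Prime) (hp5 : 5 < p) (hp3 : p % 3 = 2) :
    ∃ t : ZMod p, t ^ 2 + 4 ≠ 0 ∧ ¬ IsSquare (t ^ 2 + 4 : ZMod p) := by
  haveI : Fact p.Prime := ⟨hp⟩
  by_contra h
  push_neg at h
  -- every t² + 4 is a square (0 is also a square)
  have hsq : ∀ t : ZMod p, IsSquare (t ^ 2 + 4) := by
    intro t
    by_cases h0 : t ^ 2 + 4 = 0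
    · rw [h0]; exact IsSquare.zero
    · exact h t h0
  -- by induction, every (4 * n : ZMod p) is a square
  have hind : ∀ n : ℕ, IsSquare ((4 * n : ℕ) : ZMod p) := by
    intro n
    induction n with
    | zero => simp
    | succ n ih =>
      obtain ⟨r, hr⟩ := ih
      have he : ((4 * (n + 1) : ℕ) : ZMod p) = r ^ 2 + 4 := by
        push_cast
        rw [sq, ← hr]; push_cast; ring
      rw [he]
      exact hsq r
  have h4 : (4 : ZMod p) ≠ 0 := by
    have : ((4 : ℕ) : ZMod p) ≠ 0 := by
      rw [Ne, ZMod.natCast_eq_zero_iff]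
      intro hd
      exact absurd (Nat.le_of_dvd (by norm_num) hd) (by omega)
    simpa using this
  -- hence every element is a square
  have hall : ∀ x : ZMod p, IsSquare x := by
    intro x
    have key := hind (x * (4 : ZMod p)⁻¹).val
    have he : ((4 * (x * (4 : ZMod p)⁻¹).val : ℕ) : ZMod p) = x := by
      push_cast
      rw [ZMod.natCast_val, ZMod.cast_id]
      field_simp
    rwa [he] at key
  -- but there is a nonsquare
  have hchar : ringChar (ZMod p) ≠ 2 := by
    rw [ZMod.ringChar_zmod_n]
    omega
  obtain ⟨a, ha⟩ := FiniteField.exists_nonsquare hchar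
  exact ha (hall a)
end
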